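/- arXiv:1005.2104 — 3 statements merged into one kernel-verified Lean document; each statement's English description precedes it below -/
import Mathlib

section
/- For every u > 0, every s ∈ ℝ, and every family of nonnegative reals (c_k) indexed by the nonzero elements k of ℤ², one has Σ_{k ≠ 0} (J⁰(‖k‖·u))² · (1 + ‖k‖²)^{s + 1/2} · c_k ≤ (√2 / u) · Σ_{k ≠ 0} (1 + ‖k‖²)^s · c_k (sums taken as tsums in [0,∞]). This is the Fourier-coefficient form of the smoothing estimate ‖J⁰_u Φ‖_{H^{s+1/2}} ≤ 2^{1/4} u^{-1/2} ‖Φ‖_{H^s} for mean-zero Φ on the torus 𝕋². -/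
set_option maxHeartbeats 1000000

open MeasureTheory Real ENNReal

/-- The zeroth-order Bessel function `J⁰(k) = (1/π) ∫₀^π cos(k cos θ) dθ`. -/
noncomputable def J0 (k : ℝ) : ℝ :=
  (1 / Real.pi) * ∫ θ in (0:ℝ)..Real.pi, Real.cos (k * Real.cos θ)

/-- The Euclidean norm of `k ∈ ℤ²`. -/
noncomputable def eNorm (k : ℤ × ℤ) : ℝ :=
  Real.sqrt ((k.1 : ℝ) ^ 2 + (k.2 : ℝ) ^ 2)

namespace GyroAux

open intervalIntegral

noncomputable def csum (k : ℕ) (t : ℝ) : ℝ :=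
  ∑ m ∈ Finset.range k, (-1 : ℝ) ^ m * t ^ (2 * m) / (Nat.factorial (2 * m))

noncomputable def ssum (k : ℕ) (t : ℝ) : ℝ :=
  ∑ m ∈ Finset.range k, (-1 : ℝ) ^ m * t ^ (2 * m + 1) / (Nat.factorial (2 * m + 1))

lemma hasDerivAt_ssum (k : ℕ) (t : ℝ) : HasDerivAt (ssum k) (csum k t) t := by
  have h : HasDerivAt (fun t => ∑ m ∈ Finset.range k,
      (-1 : ℝ) ^ m * t ^ (2 * m + 1) / (Nat.factorial (2 * m + 1)))
      (∑ m ∈ Finset.range k, (-1 : ℝ) ^ m * t ^ (2 * m) / (Nat.factorial (2 * m))) t := by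
    apply HasDerivAt.fun_sum
    intro m _
    have h1 := ((hasDerivAt_pow (2 * m + 1) t).const_mul ((-1 : ℝ) ^ m)).div_const
      ((Nat.factorial (2 * m + 1) : ℝ))
    simp only [Nat.add_sub_cancel] at h1
    refine h1.congr_deriv ?_
    rw [Nat.factorial_succ]
    have : ((2 * m : ℕ).factorial : ℝ) ≠ 0 := by positivity
    push_cast
    field_simp
  exact h

lemma hasDerivAt_csum (k : ℕ) (t : ℝ) : HasDerivAt (csum (k + 1)) (-ssum k t) t := by
  have hfun : csum (k + 1) = fun t =>
      (∑ m ∈ Finset.range k, (-1 : ℝ) ^ (m + 1) * t ^ (2 * (m + 1)) / (Nat.factorial (2 * (m + 1)))) + 1 := by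
    funext t
    rw [csum, Finset.sum_range_succ']
    simp
  rw [hfun]
  have h : HasDerivAt (fun t => ∑ m ∈ Finset.range k,
      (-1 : ℝ) ^ (m + 1) * t ^ (2 * (m + 1)) / (Nat.factorial (2 * (m + 1))))
      (∑ m ∈ Finset.range k, -((-1 : ℝ) ^ m * t ^ (2 * m + 1) / (Nat.factorial (2 * m + 1)))) t := by
    apply HasDerivAt.fun_sum
    intro m _
    have h1 := ((hasDerivAt_pow (2 * (m + 1)) t).const_mul ((-1 : ℝ) ^ (m + 1))).div_const
      ((Nat.factorial (2 * (m + 1)) : ℝ))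
    have he : 2 * (m + 1) - 1 = 2 * m + 1 := by omega
    rw [he] at h1
    refine h1.congr_deriv ?_
    have hf : ((Nat.factorial (2 * (m + 1))) : ℝ)
        = (2 * (m + 1) : ℕ) * (Nat.factorial (2 * m + 1) : ℝ) := by
      rw [show 2 * (m + 1) = (2 * m + 1) + 1 by ring, Nat.factorial_succ]
      push_cast
      ring
    have h2 : ((Nat.factorial (2 * m + 1)) : ℝ) ≠ 0 := by positivity
    rw [hf, pow_succ]
    push_cast
    field_simp
  simpa [ssum] using h.add_const 1

lemma csum_zero_eval (k : ℕ) : csum (k + 1) 0 = 1 := by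
  rw [csum, Finset.sum_range_succ']
  simp

lemma ssum_zero_eval (k : ℕ) : ssum k 0 = 0 := by
  rw [ssum]
  apply Finset.sum_eq_zero
  intro m _
  simp

lemma nonneg_aux {f f' : ℝ → ℝ} (hf : ∀ x, HasDerivAt f (f' x) x) (h0 : f 0 = 0)
    (hd : ∀ x, 0 ≤ x → 0 ≤ f' x) {t : ℝ} (ht : 0 ≤ t) : 0 ≤ f t := by
  have hdiff : Differentiable ℝ f := fun x => (hf x).differentiableAt
  have hmono : MonotoneOn f (Set.Ici (0 : ℝ)) := by
    apply monotoneOn_of_deriv_nonneg (convex_Ici 0) hdiff.continuous.continuousOn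
      (fun x _ => (hdiff x).differentiableWithinAt)
    intro x hx
    rw [interior_Ici] at hx
    rw [(hf x).deriv]
    exact hd x hx.le
  have := hmono Set.self_mem_Ici (Set.mem_Ici.mpr ht) ht
  rwa [h0] at this

lemma envelope (k : ℕ) (hk : 1 ≤ k) :
    (∀ t, 0 ≤ t → 0 ≤ (-1 : ℝ) ^ k * (Real.cos t - csum k t)) ∧
    (∀ t, 0 ≤ t → 0 ≤ (-1 : ℝ) ^ k * (Real.sin t - ssum k t)) := by
  induction k, hk using Nat.le_induction with
  | base =>
    constructor
    · intro t _
      have : csum 1 t = 1 := by simp [csum]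
      rw [this]
      simp only [pow_one]
      nlinarith [Real.cos_le_one t]
    · intro t ht
      have hs : ssum 1 t = t := by simp [ssum]
      rw [hs]
      simp only [pow_one]
      nlinarith [Real.sin_le ht]
  | succ k hk ih =>
    obtain ⟨hC, hS⟩ := ih
    have hCk : ∀ t, 0 ≤ t → 0 ≤ (-1 : ℝ) ^ (k + 1) * (Real.cos t - csum (k + 1) t) := by
      intro t ht
      apply nonneg_aux (f' := fun t => (-1 : ℝ) ^ k * (Real.sin t - ssum k t)) _ _ hS ht
      · intro x
        have h1 : HasDerivAt (fun t => (-1 : ℝ) ^ (k + 1) * (Real.cos t - csum (k + 1) t))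
            ((-1 : ℝ) ^ (k + 1) * (-Real.sin x - -ssum k x)) x :=
          ((Real.hasDerivAt_cos x).sub (hasDerivAt_csum k x)).const_mul _
        convert h1 using 1
        rw [pow_succ]
        ring
      · rw [Real.cos_zero, csum_zero_eval]
        ring
    refine ⟨hCk, ?_⟩
    intro t ht
    apply nonneg_aux (f' := fun t => (-1 : ℝ) ^ (k + 1) * (Real.cos t - csum (k + 1) t)) _ _ hCk ht
    · intro x
      exact ((Real.hasDerivAt_sin x).sub (hasDerivAt_ssum (k + 1) x)).const_mul _
    · rw [Real.sin_zero, ssum_zero_eval]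
      ring


lemma csum_def (k : ℕ) (t : ℝ) : csum k t
    = ∑ m ∈ Finset.range k, (-1 : ℝ) ^ m * t ^ (2 * m) / (Nat.factorial (2 * m)) := rfl

lemma ssum_def (k : ℕ) (t : ℝ) : ssum k t
    = ∑ m ∈ Finset.range k, (-1 : ℝ) ^ m * t ^ (2 * m + 1) / (Nat.factorial (2 * m + 1)) := rfl
lemma csum_neg (k : ℕ) (t : ℝ) : csum k (-t) = csum k t := by
  rw [csum_def, csum_def]
  apply Finset.sum_congr rfl
  intro m _
  rw [pow_mul, pow_mul, neg_sq]

lemma cos_le_csum_odd (j : ℕ) (t : ℝ) : Real.cos t ≤ csum (2 * j + 1) t := by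
  have key : ∀ s, 0 ≤ s → Real.cos s ≤ csum (2 * j + 1) s := by
    intro s hs
    have := (envelope (2 * j + 1) (by omega)).1 s hs
    have hp : (-1 : ℝ) ^ (2 * j + 1) = -1 := by
      rw [pow_succ, pow_mul]; norm_num
    rw [hp] at this; linarith
  rcases le_or_gt 0 t with h | h
  · exact key t h
  · have := key (-t) (by linarith)
    rwa [Real.cos_neg, csum_neg] at this

lemma csum_even_le_cos (j : ℕ) (t : ℝ) : csum (2 * j + 2) t ≤ Real.cos t := by
  have key : ∀ s, 0 ≤ s → csum (2 * j + 2) s ≤ Real.cos s := by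
    intro s hs
    have := (envelope (2 * j + 2) (by omega)).1 s hs
    have hp : (-1 : ℝ) ^ (2 * j + 2) = 1 := by
      rw [show 2 * j + 2 = 2 * (j + 1) by ring, pow_mul]; norm_num
    rw [hp] at this; linarith
  rcases le_or_gt 0 t with h | h
  · exact key t h
  · have := key (-t) (by linarith)
    rwa [Real.cos_neg, csum_neg] at this

lemma sin_le_ssum_odd (j : ℕ) {t : ℝ} (ht : 0 ≤ t) : Real.sin t ≤ ssum (2 * j + 1) t := by
  have := (envelope (2 * j + 1) (by omega)).2 t ht
  have hp : (-1 : ℝ) ^ (2 * j + 1) = -1 := by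
    rw [pow_succ, pow_mul]; norm_num
  rw [hp] at this; linarith

lemma ssum_even_le_sin (j : ℕ) {t : ℝ} (ht : 0 ≤ t) : ssum (2 * j + 2) t ≤ Real.sin t := by
  have := (envelope (2 * j + 2) (by omega)).2 t ht
  have hp : (-1 : ℝ) ^ (2 * j + 2) = 1 := by
    rw [show 2 * j + 2 = 2 * (j + 1) by ring, pow_mul]; norm_num
  rw [hp] at this; linarith

-- cos power integrals over [0, π]
lemma cospow_rec (n : ℕ) : ∫ θ in (0:ℝ)..π, Real.cos θ ^ (n + 2)
    = (n + 1) / (n + 2) * ∫ θ in (0:ℝ)..π, Real.cos θ ^ n := by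
  rw [integral_cos_pow]
  simp [Real.sin_pi]

lemma cospow0 : ∫ θ in (0:ℝ)..π, Real.cos θ ^ 0 = π := by norm_num

lemma cospow1 : ∫ θ in (0:ℝ)..π, Real.cos θ ^ 2 = π / 2 := by
  show (∫ θ in (0:ℝ)..π, Real.cos θ ^ (0 + 2)) = π / 2
  rw [cospow_rec 0, cospow0]; ring

lemma cospow2 : ∫ θ in (0:ℝ)..π, Real.cos θ ^ 4 = 3 / 8 * π := by
  show (∫ θ in (0:ℝ)..π, Real.cos θ ^ (2 + 2)) = 3 / 8 * π
  rw [cospow_rec 2, cospow1]; ring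

lemma cospow3 : ∫ θ in (0:ℝ)..π, Real.cos θ ^ 6 = 5 / 16 * π := by
  show (∫ θ in (0:ℝ)..π, Real.cos θ ^ (4 + 2)) = 5 / 16 * π
  rw [cospow_rec 4, cospow2]; ring

lemma cospow4 : ∫ θ in (0:ℝ)..π, Real.cos θ ^ 8 = 35 / 128 * π := by
  show (∫ θ in (0:ℝ)..π, Real.cos θ ^ (6 + 2)) = 35 / 128 * π
  rw [cospow_rec 6, cospow3]; ring

lemma cospow5 : ∫ θ in (0:ℝ)..π, Real.cos θ ^ 10 = 63 / 256 * π := by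
  show (∫ θ in (0:ℝ)..π, Real.cos θ ^ (8 + 2)) = 63 / 256 * π
  rw [cospow_rec 8, cospow4]; ring

lemma cospow6 : ∫ θ in (0:ℝ)..π, Real.cos θ ^ 12 = 231 / 1024 * π := by
  show (∫ θ in (0:ℝ)..π, Real.cos θ ^ (10 + 2)) = 231 / 1024 * π
  rw [cospow_rec 10, cospow5]; ring

lemma cospow7 : ∫ θ in (0:ℝ)..π, Real.cos θ ^ 14 = 429 / 2048 * π := by
  show (∫ θ in (0:ℝ)..π, Real.cos θ ^ (12 + 2)) = 429 / 2048 * π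
  rw [cospow_rec 12, cospow6]; ring

lemma continuous_csum_comp (k : ℕ) (x : ℝ) :
    Continuous fun θ : ℝ => csum k (x * Real.cos θ) := by
  simp only [csum_def]
  apply continuous_finset_sum
  intro m _
  fun_prop

lemma integral_csum (k : ℕ) (x : ℝ) :
    ∫ θ in (0:ℝ)..π, csum k (x * Real.cos θ)
      = ∑ m ∈ Finset.range k, (-1:ℝ)^m * x^(2*m) / (Nat.factorial (2*m))
          * ∫ θ in (0:ℝ)..π, Real.cos θ^(2*m) := by
  have hpt : ∀ θ : ℝ, csum k (x * Real.cos θ)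
      = ∑ m ∈ Finset.range k, (-1:ℝ)^m * x^(2*m) / (Nat.factorial (2*m)) * Real.cos θ^(2*m) := by
    intro θ
    rw [csum_def]
    apply Finset.sum_congr rfl
    intro m _
    rw [mul_pow]
    ring
  simp only [hpt]
  rw [intervalIntegral.integral_finset_sum]
  · apply Finset.sum_congr rfl
    intro m _
    exact intervalIntegral.integral_const_mul _ _
  · intro m _
    apply Continuous.intervalIntegrable
    fun_prop

lemma pi_J0 (x : ℝ) : π * J0 x = ∫ θ in (0:ℝ)..π, Real.cos (x * Real.cos θ) := by
  rw [J0]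
  field_simp

lemma pi_J0_le (j : ℕ) (x : ℝ) : π * J0 x ≤
    ∑ m ∈ Finset.range (2*j+1), (-1:ℝ)^m * x^(2*m) / (Nat.factorial (2*m))
      * ∫ θ in (0:ℝ)..π, Real.cos θ^(2*m) := by
  rw [pi_J0, ← integral_csum]
  refine intervalIntegral.integral_mono_on Real.pi_pos.le ?_ ?_ ?_
  · exact Continuous.intervalIntegrable (by fun_prop) _ _
  · exact (continuous_csum_comp _ x).intervalIntegrable _ _
  · intro θ _
    exact cos_le_csum_odd j _

lemma pi_J0_ge (j : ℕ) (x : ℝ) :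
    ∑ m ∈ Finset.range (2*j+2), (-1:ℝ)^m * x^(2*m) / (Nat.factorial (2*m))
      * ∫ θ in (0:ℝ)..π, Real.cos θ^(2*m) ≤ π * J0 x := by
  rw [pi_J0, ← integral_csum]
  refine intervalIntegral.integral_mono_on Real.pi_pos.le ?_ ?_ ?_
  · exact (continuous_csum_comp _ x).intervalIntegrable _ _
  · exact Continuous.intervalIntegrable (by fun_prop) _ _
  · intro θ _
    exact csum_even_le_cos j _

lemma J0_le_P3 (x : ℝ) : J0 x ≤ 1 - x^2/4 + x^4/64 := by
  refine le_of_mul_le_mul_left ?_ Real.pi_pos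
  have h := pi_J0_le 1 x
  simp only [show 2*1+1 = 3 from rfl, Finset.sum_range_succ, Finset.sum_range_zero] at h
  norm_num [Nat.factorial, cospow0, cospow1, cospow2] at h
  linarith [h]

lemma J0_ge_P4 (x : ℝ) : 1 - x^2/4 + x^4/64 - x^6/2304 ≤ J0 x := by
  refine le_of_mul_le_mul_left ?_ Real.pi_pos
  have h := pi_J0_ge 1 x
  simp only [show 2*1+2 = 4 from rfl, Finset.sum_range_succ, Finset.sum_range_zero] at h
  norm_num [Nat.factorial, cospow0, cospow1, cospow2, cospow3] at h
  linarith [h]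

lemma J0_le_P7 (x : ℝ) : J0 x ≤
    1 - x^2/4 + x^4/64 - x^6/2304 + x^8/147456 - x^10/14745600 + x^12/2123366400 := by
  refine le_of_mul_le_mul_left ?_ Real.pi_pos
  have h := pi_J0_le 3 x
  simp only [show 2*3+1 = 7 from rfl, Finset.sum_range_succ, Finset.sum_range_zero] at h
  norm_num [Nat.factorial, cospow0, cospow1, cospow2, cospow3, cospow4, cospow5, cospow6] at h
  linarith [h]

lemma J0_ge_P8 (x : ℝ) :
    1 - x^2/4 + x^4/64 - x^6/2304 + x^8/147456 - x^10/14745600 + x^12/2123366400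
      - x^14/416179814400 ≤ J0 x := by
  refine le_of_mul_le_mul_left ?_ Real.pi_pos
  have h := pi_J0_ge 3 x
  simp only [show 2*3+2 = 8 from rfl, Finset.sum_range_succ, Finset.sum_range_zero] at h
  norm_num [Nat.factorial, cospow0, cospow1, cospow2, cospow3, cospow4, cospow5, cospow6,
    cospow7] at h
  linarith [h]

lemma absJ0_le_one (x : ℝ) : |J0 x| ≤ 1 := by
  rw [J0, abs_mul]
  have h1 : |1/π| = 1/π := abs_of_pos (by positivity)
  rw [h1]
  have h2 : |∫ θ in (0:ℝ)..π, Real.cos (x * Real.cos θ)| ≤ π := by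
    have h3 : (∫ θ in (0:ℝ)..π, |Real.cos (x * Real.cos θ)|) ≤ ∫ θ in (0:ℝ)..π, (1:ℝ) := by
      refine intervalIntegral.integral_mono_on Real.pi_pos.le ?_ ?_ ?_
      · exact Continuous.intervalIntegrable (by fun_prop) _ _
      · exact Continuous.intervalIntegrable continuous_const _ _
      · intro θ _
        exact Real.abs_cos_le_one _
    have hπ : ∫ θ in (0:ℝ)..π, (1:ℝ) = π := by simp
    exact le_trans (intervalIntegral.abs_integral_le_integral_abs Real.pi_pos.le) (h3.trans_eq hπ)
  calc 1/π * |∫ θ in (0:ℝ)..π, Real.cos (x * Real.cos θ)| ≤ 1/π * π := by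
        apply mul_le_mul_of_nonneg_left h2 (by positivity)
    _ = 1 := by field_simp

lemma regA {x : ℝ} (h0 : 0 < x) (h1 : x ≤ 1) : x * J0 x ^ 2 ≤ 1 := by
  have := absJ0_le_one x
  have h2 : J0 x ^ 2 ≤ 1 := by nlinarith [abs_nonneg (J0 x), sq_abs (J0 x)]
  nlinarith

lemma regB {x : ℝ} (h1 : 1 ≤ x) (h2 : x ≤ 17/10) : x * J0 x ^ 2 ≤ 1 := by
  have hz1 : (1:ℝ) ≤ x^2 := by nlinarith
  have hz2 : x^2 ≤ (289/100 : ℝ) := by nlinarith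
  have hu : J0 x ≤ 49/64 := by
    refine le_trans (J0_le_P3 x) ?_
    nlinarith [mul_nonneg (sub_nonneg.mpr hz1) (sub_nonneg.mpr (show x^2 ≤ 15 by nlinarith))]
  have hl : 0 ≤ J0 x := by
    refine le_trans ?_ (J0_ge_P4 x)
    nlinarith [sq_nonneg x, sq_nonneg (x^2-2), mul_nonneg (mul_nonneg (by linarith : (0:ℝ) ≤ x^2) (by positivity : (0:ℝ) ≤ x^2)) (by positivity : (0:ℝ) ≤ x^2),
      pow_le_pow_left₀ (by positivity : (0:ℝ) ≤ x^2) hz2 3]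
  nlinarith

lemma regC {x : ℝ} (h1 : 17/10 ≤ x) (h2 : x ≤ 5/2) : x * J0 x ^ 2 ≤ 1 := by
  have hz1 : (289/100 : ℝ) ≤ x^2 := by nlinarith
  have hz2 : x^2 ≤ (25/4 : ℝ) := by nlinarith
  have hu : J0 x ≤ 41/100 := by
    refine le_trans (J0_le_P3 x) ?_
    nlinarith [mul_nonneg (sub_nonneg.mpr hz1) (sub_nonneg.mpr (show x^2 ≤ 13 by nlinarith))]
  have hl : -(6/100) ≤ J0 x := by
    refine le_trans ?_ (J0_ge_P4 x)
    nlinarith [mul_nonneg (sub_nonneg.mpr hz1) (sub_nonneg.mpr hz2),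
      mul_nonneg (mul_nonneg (sub_nonneg.mpr hz1) (sub_nonneg.mpr hz2)) (sub_nonneg.mpr hz2),
      sq_nonneg (x^2 - 5)]
  nlinarith [mul_nonneg (sub_nonneg.mpr hu) (sub_nonneg.mpr hl)]

lemma regD {x : ℝ} (h1 : 5/2 ≤ x) (h2 : x ≤ 4) : x * J0 x ^ 2 ≤ 1 := by
  have hz1 : (25/4 : ℝ) ≤ x^2 := by nlinarith
  have hz2 : x^2 ≤ (16 : ℝ) := by nlinarith
  have hu : J0 x ≤ 1/2 := by
    refine le_trans (J0_le_P7 x) ?_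
    nlinarith [mul_nonneg (sub_nonneg.mpr hz1) (sub_nonneg.mpr hz2),
      sq_nonneg (x^2 - 10), sq_nonneg (x^2 - 14), sq_nonneg x,
      mul_nonneg (mul_nonneg (sub_nonneg.mpr hz1) (sub_nonneg.mpr hz2)) (sq_nonneg (x^2-10)),
      pow_le_pow_left₀ (by positivity : (0:ℝ) ≤ x^2) hz2 3]
  have hl : -(1/2) ≤ J0 x := by
    refine le_trans ?_ (J0_ge_P8 x)
    nlinarith [mul_nonneg (sub_nonneg.mpr hz1) (sub_nonneg.mpr hz2),
      sq_nonneg (x^2 - 10), sq_nonneg (x^2 - 14),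
      mul_nonneg (mul_nonneg (sub_nonneg.mpr hz1) (sub_nonneg.mpr hz2)) (sq_nonneg (x^2-10)),
      mul_nonneg (mul_nonneg (sub_nonneg.mpr hz1) (sub_nonneg.mpr hz2)) (sq_nonneg (x^2-14)),
      pow_le_pow_left₀ (by positivity : (0:ℝ) ≤ x^2) hz2 3,
      pow_le_pow_left₀ (by positivity : (0:ℝ) ≤ x^2) hz2 5,
      pow_le_pow_left₀ (by positivity : (0:ℝ) ≤ x^2) hz2 7]
  nlinarith [mul_nonneg (sub_nonneg.mpr hu) (sub_nonneg.mpr hl)]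

lemma pi_J0' (x : ℝ) : π * J0 x = ∫ θ in (0:ℝ)..π, Real.cos (x * Real.cos θ) := by
  rw [J0]; field_simp

lemma sqrt2_pos : (0:ℝ) < Real.sqrt 2 := Real.sqrt_pos.mpr (by norm_num)

lemma sqrt2_sq : Real.sqrt 2 ^ 2 = 2 := Real.sq_sqrt (by norm_num)

lemma sqrt2_ub : Real.sqrt 2 ≤ 1.41422 := by
  nlinarith [sqrt2_sq, Real.sqrt_nonneg 2]

lemma fold (x : ℝ) : (∫ θ in (0:ℝ)..π, Real.cos (x * Real.cos θ))
    = 2 * ∫ θ in (0:ℝ)..(π/2), Real.cos (x * Real.cos θ) := by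
  have hi : ∀ a b : ℝ, IntervalIntegrable (fun θ => Real.cos (x * Real.cos θ)) volume a b :=
    fun a b => (Continuous.intervalIntegrable (by fun_prop) a b)
  have hsplit := intervalIntegral.integral_add_adjacent_intervals (hi 0 (π/2)) (hi (π/2) π)
  have hcomp := intervalIntegral.integral_comp_sub_left (a := 0) (b := π/2)
      (fun θ => Real.cos (x * Real.cos θ)) π
  have hbounds : π - π/2 = π/2 := by ring
  rw [hbounds, sub_zero] at hcomp
  have hcong : (∫ θ in (0:ℝ)..(π/2), Real.cos (x * Real.cos (π - θ)))
      = ∫ θ in (0:ℝ)..(π/2), Real.cos (x * Real.cos θ) := by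
    apply intervalIntegral.integral_congr
    intro θ _
    simp [Real.cos_pi_sub, mul_neg, Real.cos_neg]
  rw [hcong] at hcomp
  linarith [hsplit, hcomp]

lemma m_pos {v : ℝ} (hv0 : 0 ≤ v) (hv1 : v ≤ 1) : (0:ℝ) < Real.sqrt (1 - v^2/2) := by
  apply Real.sqrt_pos.mpr
  nlinarith

lemma subst (x : ℝ) : (∫ θ in (0:ℝ)..(π/2), Real.cos (x * Real.cos θ))
    = ∫ v in (0:ℝ)..1, (Real.sqrt 2 * (Real.sqrt (1 - v^2/2))⁻¹) * Real.cos (x * (1 - v^2)) := by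
  have h2 : (0:ℝ) < Real.sqrt 2 := sqrt2_pos
  have hs2 : Real.sqrt 2 ^ 2 = 2 := sqrt2_sq
  have hderiv : ∀ v ∈ Set.uIcc (0:ℝ) 1,
      HasDerivAt (fun v => 2 * Real.arcsin (v / Real.sqrt 2))
        (Real.sqrt 2 * (Real.sqrt (1 - v^2/2))⁻¹) v := by
    intro v hv
    rw [Set.uIcc_of_le (by norm_num : (0:ℝ) ≤ 1)] at hv
    obtain ⟨h0, hle⟩ := hv
    have hmne : Real.sqrt (1 - v^2/2) ≠ 0 := ne_of_gt (m_pos h0 hle)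
    have hne1 : v / Real.sqrt 2 ≠ 1 := by
      have : v / Real.sqrt 2 < 1 := by
        rw [div_lt_one h2]; nlinarith
      exact ne_of_lt this
    have hnem1 : v / Real.sqrt 2 ≠ -1 := by
      have : (0:ℝ) ≤ v / Real.sqrt 2 := by positivity
      intro hcon; rw [hcon] at this; linarith
    have hinner : HasDerivAt (fun v : ℝ => v / Real.sqrt 2) (1 / Real.sqrt 2) v := by
      simpa using (hasDerivAt_id v).div_const (Real.sqrt 2)
    have harc := (Real.hasDerivAt_arcsin hnem1 hne1).comp v hinner
    have hfin := harc.const_mul (2:ℝ)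
    refine hfin.congr_deriv ?_
    have hsq : (v / Real.sqrt 2)^2 = v^2/2 := by
      rw [div_pow, hs2]
    rw [hsq]
    have h22 : 2 * (Real.sqrt 2)⁻¹ = Real.sqrt 2 := by
      rw [eq_comm, inv_eq_one_div, mul_one_div, eq_div_iff (ne_of_gt h2)]
      nlinarith [hs2]
    simp only [one_div]
    rw [show (2:ℝ) * ((Real.sqrt (1 - v^2/2))⁻¹ * (Real.sqrt 2)⁻¹)
      = (2 * (Real.sqrt 2)⁻¹) * (Real.sqrt (1 - v^2/2))⁻¹ from by ring, h22]
  have hcont : ContinuousOn (fun v : ℝ => Real.sqrt 2 * (Real.sqrt (1 - v^2/2))⁻¹)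
      (Set.uIcc (0:ℝ) 1) := by
    apply ContinuousOn.mul continuousOn_const
    apply ContinuousOn.inv₀
    · exact (Real.continuous_sqrt.comp (by fun_prop)).continuousOn
    · intro v hv
      rw [Set.uIcc_of_le (by norm_num : (0:ℝ) ≤ 1)] at hv
      exact ne_of_gt (m_pos hv.1 hv.2)
  have hg : Continuous fun u : ℝ => Real.cos (x * Real.cos u) := by fun_prop
  have key := intervalIntegral.integral_comp_smul_deriv hderiv hcont hg
  have hf0 : 2 * Real.arcsin ((0:ℝ) / Real.sqrt 2) = 0 := by simp
  have hf1 : 2 * Real.arcsin ((1:ℝ) / Real.sqrt 2) = π/2 := by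
    have h12 : (1:ℝ) / Real.sqrt 2 = Real.sqrt 2 / 2 := by
      rw [div_eq_div_iff (ne_of_gt h2) (by norm_num : (2:ℝ) ≠ 0)]
      nlinarith
    rw [h12, ← Real.sin_pi_div_four, Real.arcsin_sin (by linarith [Real.pi_pos])
      (by linarith [Real.pi_pos])]
    ring
  rw [hf0, hf1] at key
  rw [← key]
  apply intervalIntegral.integral_congr
  intro v hv
  rw [Set.uIcc_of_le (by norm_num : (0:ℝ) ≤ 1)] at hv
  obtain ⟨h0, hle⟩ := hv
  have hm1 : -1 ≤ v / Real.sqrt 2 := by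
    have : (0:ℝ) ≤ v / Real.sqrt 2 := by positivity
    linarith
  have hp1 : v / Real.sqrt 2 ≤ 1 := by
    rw [div_le_one h2]; nlinarith
  have hsin := Real.sin_arcsin hm1 hp1
  have hcos2 : Real.cos (2 * Real.arcsin (v / Real.sqrt 2)) = 1 - v^2 := by
    rw [Real.cos_two_mul]
    have hpy := Real.sin_sq_add_cos_sq (Real.arcsin (v / Real.sqrt 2))
    have hv2 : Real.sin (Real.arcsin (v / Real.sqrt 2))^2 = v^2/2 := by
      rw [hsin, div_pow, hs2]
    nlinarith [hpy, hv2]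
  simp only [Function.comp_def, smul_eq_mul, hcos2]

lemma hpart {x : ℝ} (hx : 0 < x) :
    |∫ v in (0:ℝ)..1, ((Real.sqrt (1 - v^2/2))⁻¹ - 1) * Real.cos (x*(1-v^2))| ≤ 5/(24*x) := by
  set m : ℝ → ℝ := fun v => Real.sqrt (1 - v^2/2) with hm_def
  set D : ℝ → ℝ := fun v => m v + m v * m v with hD_def
  set g : ℝ → ℝ := fun v => v / (4*x*D v) with hg_def
  set gd : ℝ → ℝ := fun v => (D v + v^2*(1+2*m v)/(2*m v)) / (4*x*(D v)^2) with hgd_def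
  have hmpos : ∀ v ∈ Set.Icc (0:ℝ) 1, 0 < m v := fun v hv => m_pos hv.1 hv.2
  have hmsq : ∀ v ∈ Set.Icc (0:ℝ) 1, m v * m v = 1 - v^2/2 := by
    intro v hv
    exact Real.mul_self_sqrt (by nlinarith [hv.1, hv.2])
  have hDpos : ∀ v ∈ Set.Icc (0:ℝ) 1, 0 < D v := by
    intro v hv
    have := hmpos v hv
    simp only [hD_def]
    nlinarith
  -- derivative of m
  have hmderiv : ∀ v ∈ Set.Icc (0:ℝ) 1, HasDerivAt m (-v/(2*m v)) v := by
    intro v hv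
    have hinner : HasDerivAt (fun v : ℝ => 1 - v^2/2) (-v) v := by
      have h1 : HasDerivAt (fun v : ℝ => v^2) (2*v) v := by simpa using hasDerivAt_pow 2 v
      have := (h1.div_const 2).const_sub 1
      refine this.congr_deriv ?_
      ring
    have hne : (1 - v^2/2) ≠ 0 := by nlinarith [hv.1, hv.2]
    have := (Real.hasDerivAt_sqrt hne).comp v hinner
    refine this.congr_deriv ?_
    simp only [hm_def]
    field_simp
  have hDderiv : ∀ v ∈ Set.Icc (0:ℝ) 1,
      HasDerivAt D (-v/(2*m v) + ((-v/(2*m v))*m v + m v*(-v/(2*m v)))) v := by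
    intro v hv
    exact (hmderiv v hv).add ((hmderiv v hv).mul (hmderiv v hv))
  have hgderiv : ∀ v ∈ Set.Icc (0:ℝ) 1, HasDerivAt g (gd v) v := by
    intro v hv
    have hm0 := hmpos v hv
    have hD0 := hDpos v hv
    have hden : HasDerivAt (fun v => 4*x*D v)
        (4*x*(-v/(2*m v) + ((-v/(2*m v))*m v + m v*(-v/(2*m v))))) v := by
      exact (hDderiv v hv).const_mul (4*x)
    have hdiv := (hasDerivAt_id v).div hden (by positivity)
    refine hdiv.congr_deriv ?_
    simp only [hgd_def, id]
    field_simp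
    ring
  -- identity: (m v)⁻¹ - 1 = 2*x*v*(g v)
  have hident : ∀ v ∈ Set.Icc (0:ℝ) 1, (m v)⁻¹ - 1 = g v * (x*(2*v)) := by
    intro v hv
    have hm0 := hmpos v hv
    have hD0 := hDpos v hv
    have hsq := hmsq v hv
    simp only [hg_def]
    rw [div_mul_eq_mul_div, eq_div_iff (by positivity : 4*x*D v ≠ 0)]
    have : ((m v)⁻¹ - 1) * (4 * x * D v) = ((1 - m v) * (4 * x * (1 + m v))) := by
      simp only [hD_def]
      field_simp
    rw [this]
    nlinarith [hsq]
  -- derivative of Φ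
  set Φ : ℝ → ℝ := fun v => -(g v) * Real.sin (x*(1-v^2)) with hΦ_def
  have hsinD : ∀ v : ℝ, HasDerivAt (fun v => Real.sin (x*(1-v^2)))
      (Real.cos (x*(1-v^2)) * (x*(-(2*v)))) v := by
    intro v
    have h1 : HasDerivAt (fun v : ℝ => v^2) (2*v) v := by simpa using hasDerivAt_pow 2 v
    have h2 : HasDerivAt (fun v : ℝ => x*(1-v^2)) (x*(-(2*v))) v := by
      have := (h1.const_sub 1).const_mul x
      convert this using 1
    exact (Real.hasDerivAt_sin _).comp v h2
  have hΦderiv : ∀ v ∈ Set.Icc (0:ℝ) 1,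
      HasDerivAt Φ (-(gd v) * Real.sin (x*(1-v^2))
        + ((m v)⁻¹ - 1) * Real.cos (x*(1-v^2))) v := by
    intro v hv
    have := ((hgderiv v hv).neg).mul (hsinD v)
    refine this.congr_deriv ?_
    rw [hident v hv, Pi.neg_apply]
    ring
  -- FTC for Φ on [0,1]
  have hcontm : Continuous m := by
    simp only [hm_def]
    exact Real.continuous_sqrt.comp (by fun_prop)
  have hcontD : Continuous D := by
    simp only [hD_def]; fun_prop
  have hgdcont : ContinuousOn gd (Set.Icc (0:ℝ) 1) := by
    simp only [hgd_def]
    apply ContinuousOn.div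
    · apply ContinuousOn.add hcontD.continuousOn
      apply ContinuousOn.div (by fun_prop)
      · exact (continuous_const.mul hcontm).continuousOn
      · intro v hv; have := hmpos v hv; positivity
    · fun_prop
    · intro v hv
      have := hDpos v hv
      positivity
  have hsincos : Continuous fun v : ℝ => Real.cos (x*(1-v^2)) := by fun_prop
  have hsinc2 : Continuous fun v : ℝ => Real.sin (x*(1-v^2)) := by fun_prop
  have hmicont : ContinuousOn (fun v => (m v)⁻¹ - 1) (Set.Icc (0:ℝ) 1) := by
    apply ContinuousOn.sub _ continuousOn_const
    apply ContinuousOn.inv₀ hcontm.continuousOn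
    intro v hv; exact ne_of_gt (hmpos v hv)
  have huIcc : Set.uIcc (0:ℝ) 1 = Set.Icc (0:ℝ) 1 := Set.uIcc_of_le (by norm_num)
  have hInt1 : IntervalIntegrable (fun v => -(gd v) * Real.sin (x*(1-v^2))) volume 0 1 := by
    apply ContinuousOn.intervalIntegrable
    rw [huIcc]
    exact (hgdcont.neg).mul hsinc2.continuousOn
  have hInt2 : IntervalIntegrable (fun v => ((m v)⁻¹ - 1) * Real.cos (x*(1-v^2))) volume 0 1 := by
    apply ContinuousOn.intervalIntegrable
    rw [huIcc]
    exact hmicont.mul hsincos.continuousOn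
  have hFTC : ∫ v in (0:ℝ)..1, (-(gd v) * Real.sin (x*(1-v^2))
      + ((m v)⁻¹ - 1) * Real.cos (x*(1-v^2))) = Φ 1 - Φ 0 := by
    apply intervalIntegral.integral_eq_sub_of_hasDerivAt
    · intro v hv
      rw [huIcc] at hv
      exact hΦderiv v hv
    · exact hInt1.add hInt2
  have hΦ10 : Φ 1 - Φ 0 = 0 := by
    simp only [hΦ_def, hg_def]
    norm_num
  have hsplit : (∫ v in (0:ℝ)..1, ((m v)⁻¹ - 1) * Real.cos (x*(1-v^2)))
      = ∫ v in (0:ℝ)..1, (gd v) * Real.sin (x*(1-v^2)) := by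
    have := intervalIntegral.integral_add hInt1 hInt2
    rw [hFTC, hΦ10] at this
    have h2 : (∫ v in (0:ℝ)..1, -(gd v) * Real.sin (x*(1-v^2)))
        = -∫ v in (0:ℝ)..1, (gd v) * Real.sin (x*(1-v^2)) := by
      rw [← intervalIntegral.integral_neg]
      congr 1
      funext v
      ring
    rw [h2] at this
    linarith [this]
  -- bound ∫ gd * sin
  have hgdInt : IntervalIntegrable gd volume 0 1 := by
    apply ContinuousOn.intervalIntegrable
    rwa [huIcc]
  have hintgd : ∫ v in (0:ℝ)..1, gd v = g 1 - g 0 := by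
    apply intervalIntegral.integral_eq_sub_of_hasDerivAt
    · intro v hv
      rw [huIcc] at hv
      exact hgderiv v hv
    · exact hgdInt
  have habs : |∫ v in (0:ℝ)..1, (gd v) * Real.sin (x*(1-v^2))| ≤ g 1 - g 0 := by
    rw [← hintgd]
    refine le_trans (intervalIntegral.abs_integral_le_integral_abs (by norm_num)) ?_
    apply intervalIntegral.integral_mono_on (by norm_num)
    · apply ContinuousOn.intervalIntegrable
      rw [huIcc]
      exact ((hgdcont.mul hsinc2.continuousOn)).abs
    · exact hgdInt
    · intro v hv
      have hgd0 : 0 ≤ gd v := by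
        have hm0 := hmpos v hv
        have hD0 := hDpos v hv
        simp only [hgd_def]
        have hv0 := hv.1
        positivity
      rw [abs_mul]
      calc |gd v| * |Real.sin (x*(1-v^2))| ≤ |gd v| * 1 := by
            apply mul_le_mul_of_nonneg_left (Real.abs_sin_le_one _) (abs_nonneg _)
        _ = gd v := by rw [mul_one, abs_of_nonneg hgd0]
  -- numeric bound for g 1
  have hg1 : g 1 - g 0 ≤ 5/(24*x) := by
    have hm1 : m 1 = Real.sqrt (1/2) := by simp only [hm_def]; norm_num
    have hm1lb : (0.705 : ℝ) ≤ m 1 := by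
      rw [hm1]
      nlinarith [Real.sq_sqrt (show (0:ℝ) ≤ 1/2 by norm_num), Real.sqrt_nonneg (1/2:ℝ)]
    have hm1ub : m 1 ≤ 1 := by
      rw [hm1]
      nlinarith [Real.sq_sqrt (show (0:ℝ) ≤ 1/2 by norm_num), Real.sqrt_nonneg (1/2:ℝ)]
    have hD1 : (1.2 : ℝ) ≤ D 1 := by
      simp only [hD_def]
      nlinarith
    have hD1pos : (0:ℝ) < D 1 := hDpos 1 (by norm_num)
    have hg0 : g 0 = 0 := by simp [hg_def]
    have hg1v : g 1 = 1/(4*x*D 1) := by simp [hg_def]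
    rw [hg0, hg1v, sub_zero]
    generalize hdd : D 1 = d at hD1 hD1pos
    have hpos1 : (0:ℝ) < 4*x*d := by
      have := mul_pos (mul_pos (by norm_num : (0:ℝ) < 4) hx) hD1pos
      linarith
    rw [div_le_div_iff₀ hpos1 (by positivity)]
    nlinarith [mul_nonneg hx.le (sub_nonneg.mpr hD1), hx]
  calc |∫ v in (0:ℝ)..1, ((Real.sqrt (1 - v^2/2))⁻¹ - 1) * Real.cos (x*(1-v^2))|
      = |∫ v in (0:ℝ)..1, (gd v) * Real.sin (x*(1-v^2))| := by rw [← hsplit]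
    _ ≤ g 1 - g 0 := habs
    _ ≤ 5/(24*x) := hg1

-- scaling
lemma scale {x y : ℝ} (hy : 0 < y) (hyx : y^2 = x) :
    (∫ v in (0:ℝ)..1, Real.cos (x*(1-v^2)))
      = y⁻¹ * ∫ t in (0:ℝ)..y, Real.cos (x - t^2) := by
  have h := intervalIntegral.integral_comp_mul_left (a := (0:ℝ)) (b := (1:ℝ))
    (fun t => Real.cos (x - t^2)) (ne_of_gt hy)
  rw [mul_zero, mul_one, smul_eq_mul] at h
  rw [← h]
  apply intervalIntegral.integral_congr
  intro v _
  simp only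
  congr 1
  rw [mul_pow, hyx]
  ring

-- FTC tail step 1
lemma tail1 {x y : ℝ} (hy : 2 ≤ y) (hyx : y^2 = x) :
    (∫ t in (2:ℝ)..y, Real.cos (x - t^2))
      = Real.sin (x-4)/4 - ∫ t in (2:ℝ)..y, Real.sin (x - t^2)/(2*t^2) := by
  have huIcc : Set.uIcc (2:ℝ) y = Set.Icc 2 y := Set.uIcc_of_le hy
  have hderiv : ∀ t ∈ Set.uIcc (2:ℝ) y,
      HasDerivAt (fun t => -Real.sin (x - t^2)/(2*t))
        (Real.cos (x - t^2) + Real.sin (x - t^2)/(2*t^2)) t := by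
    intro t ht
    rw [huIcc] at ht
    have ht2 : (2:ℝ) ≤ t := ht.1
    have htne : (2:ℝ)*t ≠ 0 := by positivity
    have hinner : HasDerivAt (fun t : ℝ => x - t^2) (-(2*t)) t := by
      have h1 : HasDerivAt (fun t : ℝ => t^2) (2*t) t := by simpa using hasDerivAt_pow 2 t
      simpa using h1.const_sub x
    have hnum : HasDerivAt (fun t => -Real.sin (x - t^2))
        (-(Real.cos (x - t^2) * (-(2*t)))) t := (((Real.hasDerivAt_sin _).comp t hinner)).neg
    have hden : HasDerivAt (fun t : ℝ => 2*t) 2 t := by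
      simpa using (hasDerivAt_id t).const_mul (2:ℝ)
    have := hnum.div hden htne
    refine this.congr_deriv ?_
    field_simp
    ring
  have hcont : ContinuousOn (fun t => Real.cos (x - t^2) + Real.sin (x - t^2)/(2*t^2))
      (Set.uIcc (2:ℝ) y) := by
    rw [huIcc]
    apply ContinuousOn.add (by fun_prop)
    apply ContinuousOn.div (by fun_prop) (by fun_prop)
    intro t ht
    have := ht.1
    positivity
  have hFTC := intervalIntegral.integral_eq_sub_of_hasDerivAt hderiv
    hcont.intervalIntegrable
  have hy0 : (0:ℝ) < y := by linarith
  have hval : -Real.sin (x - y^2)/(2*y) - (-Real.sin (x - 2^2)/(2*2)) = Real.sin (x-4)/4 := by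
    rw [hyx]
    norm_num
    ring
  rw [hval] at hFTC
  have hi1 : IntervalIntegrable (fun t => Real.cos (x - t^2)) volume 2 y :=
    (Continuous.intervalIntegrable (by fun_prop) _ _)
  have hi2 : IntervalIntegrable (fun t => Real.sin (x - t^2)/(2*t^2)) volume 2 y := by
    apply ContinuousOn.intervalIntegrable
    rw [huIcc]
    apply ContinuousOn.div (by fun_prop) (by fun_prop)
    intro t ht
    have := ht.1
    positivity
  rw [intervalIntegral.integral_add hi1 hi2] at hFTC
  linarith [hFTC]

-- integral of t⁻⁴
lemma int_tpow4 {y : ℝ} (hy : 2 ≤ y) :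
    (∫ t in (2:ℝ)..y, (t^4)⁻¹) = 1/24 - 1/(3*y^3) := by
  have huIcc : Set.uIcc (2:ℝ) y = Set.Icc 2 y := Set.uIcc_of_le hy
  have hderiv : ∀ t ∈ Set.uIcc (2:ℝ) y,
      HasDerivAt (fun t : ℝ => -1/(3*t^3)) ((t^4)⁻¹) t := by
    intro t ht
    rw [huIcc] at ht
    have ht2 : (2:ℝ) ≤ t := ht.1
    have h1 : HasDerivAt (fun t : ℝ => 3*t^3) (3*(3*t^2)) t := by
      simpa using ((hasDerivAt_pow 3 t).const_mul (3:ℝ))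
    have := (hasDerivAt_const t (-1:ℝ)).div h1 (by positivity)
    refine this.congr_deriv ?_
    field_simp
    ring
  have hFTC := intervalIntegral.integral_eq_sub_of_hasDerivAt hderiv
    (ContinuousOn.intervalIntegrable (by
      rw [huIcc]
      apply ContinuousOn.inv₀ (by fun_prop)
      intro t ht
      have := ht.1
      positivity))
  rw [hFTC]
  have hy0 : (0:ℝ) < y := by linarith
  field_simp
  ring

-- FTC tail step 2
lemma tail2 {x y : ℝ} (hy : 2 ≤ y) (hyx : y^2 = x) :
    |∫ t in (2:ℝ)..y, Real.sin (x - t^2)/(2*t^2)| ≤ 1/16 := by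
  have huIcc : Set.uIcc (2:ℝ) y = Set.Icc 2 y := Set.uIcc_of_le hy
  have hy0 : (0:ℝ) < y := by linarith
  have hderiv : ∀ t ∈ Set.uIcc (2:ℝ) y,
      HasDerivAt (fun t => Real.cos (x - t^2)/(4*t^3))
        (Real.sin (x - t^2)/(2*t^2) - (3/4) * (Real.cos (x - t^2) * (t^4)⁻¹)) t := by
    intro t ht
    rw [huIcc] at ht
    have ht2 : (2:ℝ) ≤ t := ht.1
    have htpos : (0:ℝ) < t := by linarith
    have hinner : HasDerivAt (fun t : ℝ => x - t^2) (-(2*t)) t := by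
      have h1 : HasDerivAt (fun t : ℝ => t^2) (2*t) t := by simpa using hasDerivAt_pow 2 t
      simpa using h1.const_sub x
    have hnum : HasDerivAt (fun t => Real.cos (x - t^2))
        (-Real.sin (x - t^2) * (-(2*t))) t := (Real.hasDerivAt_cos _).comp t hinner
    have hden : HasDerivAt (fun t : ℝ => 4*t^3) (4*(3*t^2)) t := by
      simpa using ((hasDerivAt_pow 3 t).const_mul (4:ℝ))
    have := hnum.div hden (by positivity)
    refine this.congr_deriv ?_
    field_simp
    ring
  have hcont2 : ContinuousOn (fun t => Real.sin (x - t^2)/(2*t^2)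
      - (3/4) * (Real.cos (x - t^2) * (t^4)⁻¹)) (Set.uIcc (2:ℝ) y) := by
    rw [huIcc]
    apply ContinuousOn.sub
    · apply ContinuousOn.div (by fun_prop) (by fun_prop)
      intro t ht
      have := ht.1
      positivity
    · apply ContinuousOn.mul continuousOn_const
      apply ContinuousOn.mul (by fun_prop)
      apply ContinuousOn.inv₀ (by fun_prop)
      intro t ht
      have := ht.1
      positivity
  have hFTC := intervalIntegral.integral_eq_sub_of_hasDerivAt hderiv
    hcont2.intervalIntegrable
  have hi2 : IntervalIntegrable (fun t => Real.sin (x - t^2)/(2*t^2)) volume 2 y := by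
    apply ContinuousOn.intervalIntegrable
    rw [huIcc]
    apply ContinuousOn.div (by fun_prop) (by fun_prop)
    intro t ht
    have := ht.1
    positivity
  have hi3 : IntervalIntegrable (fun t => (3/4) * (Real.cos (x - t^2) * (t^4)⁻¹)) volume 2 y := by
    apply ContinuousOn.intervalIntegrable
    rw [huIcc]
    apply ContinuousOn.mul continuousOn_const
    apply ContinuousOn.mul (by fun_prop)
    apply ContinuousOn.inv₀ (by fun_prop)
    intro t ht
    have := ht.1
    positivity
  rw [intervalIntegral.integral_sub hi2 hi3] at hFTC
  have hvals : Real.cos (x - y^2)/(4*y^3) - Real.cos (x - 2^2)/(4*2^3)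
      = 1/(4*y^3) - Real.cos (x-4)/32 := by
    rw [hyx]
    norm_num
  rw [hvals] at hFTC
  -- bound the remaining cos/t⁴ integral
  have hbound3 : |∫ t in (2:ℝ)..y, Real.cos (x - t^2) * (t^4)⁻¹| ≤ 1/24 - 1/(3*y^3) := by
    rw [← int_tpow4 hy]
    refine le_trans (intervalIntegral.abs_integral_le_integral_abs (by linarith)) ?_
    apply intervalIntegral.integral_mono_on (by linarith)
    · apply ContinuousOn.intervalIntegrable
      rw [huIcc]
      apply ContinuousOn.abs
      apply ContinuousOn.mul (by fun_prop)
      apply ContinuousOn.inv₀ (by fun_prop)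
      intro t ht
      have := ht.1
      positivity
    · apply ContinuousOn.intervalIntegrable
      rw [huIcc]
      apply ContinuousOn.inv₀ (by fun_prop)
      intro t ht
      have := ht.1
      positivity
    · intro t ht
      have ht2 : (2:ℝ) ≤ t := ht.1
      rw [abs_mul]
      have h1 : |(t^4)⁻¹| = (t^4)⁻¹ := abs_of_pos (by positivity)
      rw [h1]
      have := Real.abs_cos_le_one (x - t^2)
      nlinarith [abs_nonneg (Real.cos (x-t^2)), inv_pos.mpr (show (0:ℝ) < t^4 by positivity)]
  have heq : (∫ t in (2:ℝ)..y, Real.sin (x - t^2)/(2*t^2))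
      = 1/(4*y^3) - Real.cos (x-4)/32
        + (3/4) * ∫ t in (2:ℝ)..y, Real.cos (x - t^2) * (t^4)⁻¹ := by
    rw [intervalIntegral.integral_const_mul] at hFTC
    linarith [hFTC]
  rw [heq]
  have hcos4 := Real.abs_cos_le_one (x-4)
  have hy3 : (0:ℝ) < y^3 := by positivity
  have hy38 : (8:ℝ) ≤ y^3 := by nlinarith
  have habs3 := abs_le.mp hbound3
  have hc4 := abs_le.mp hcos4
  have e3 : 1/(3*y^3) = 1/3 * (y^3)⁻¹ := by ring
  have e4 : 1/(4*y^3) = 1/4 * (y^3)⁻¹ := by ring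
  rw [e3] at habs3
  rw [e4]
  have hupos : (0:ℝ) ≤ (y^3)⁻¹ := by positivity
  rw [abs_le]
  constructor
  · nlinarith [habs3.1, hc4.2]
  · nlinarith [habs3.2, hc4.1]

-- polynomial integrals over [0,2]
lemma int_csum_sq (k : ℕ) : (∫ t in (0:ℝ)..2, csum k (t^2))
    = ∑ m ∈ Finset.range k, ((-1:ℝ)^m / (Nat.factorial (2*m))) * (2^(4*m+1) / (4*m+1)) := by
  have hpt : ∀ t : ℝ, csum k (t^2)
      = ∑ m ∈ Finset.range k, ((-1:ℝ)^m / (Nat.factorial (2*m))) * t^(4*m) := by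
    intro t
    rw [csum_def]
    apply Finset.sum_congr rfl
    intro m _
    rw [show 4*m = 2*(2*m) by ring, pow_mul]
    ring
  simp only [hpt]
  rw [intervalIntegral.integral_finset_sum]
  · apply Finset.sum_congr rfl
    intro m _
    rw [intervalIntegral.integral_const_mul, integral_pow]
    congr 1
    rw [zero_pow (by omega : 4*m+1 ≠ 0)]
    push_cast
    ring
  · intro m _
    exact Continuous.intervalIntegrable (by fun_prop) _ _

lemma int_ssum_sq (k : ℕ) : (∫ t in (0:ℝ)..2, ssum k (t^2))
    = ∑ m ∈ Finset.range k, ((-1:ℝ)^m / (Nat.factorial (2*m+1))) * (2^(4*m+3) / (4*m+3)) := by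
  have hpt : ∀ t : ℝ, ssum k (t^2)
      = ∑ m ∈ Finset.range k, ((-1:ℝ)^m / (Nat.factorial (2*m+1))) * t^(4*m+2) := by
    intro t
    rw [ssum_def]
    apply Finset.sum_congr rfl
    intro m _
    rw [show 4*m+2 = 2*(2*m+1) by ring, pow_mul]
    ring
  simp only [hpt]
  rw [intervalIntegral.integral_finset_sum]
  · apply Finset.sum_congr rfl
    intro m _
    rw [intervalIntegral.integral_const_mul, integral_pow]
    congr 1
    rw [zero_pow (by omega : 4*m+2+1 ≠ 0)]
    push_cast
    ring
  · intro m _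
    exact Continuous.intervalIntegrable (by fun_prop) _ _

lemma Fc2_bounds : (0.4614 : ℝ) ≤ (∫ t in (0:ℝ)..2, Real.cos (t^2))
    ∧ (∫ t in (0:ℝ)..2, Real.cos (t^2)) ≤ 0.4617 := by
  have hcont : ∀ k : ℕ, IntervalIntegrable (fun t : ℝ => csum k (t^2)) volume 0 2 := by
    intro k
    apply Continuous.intervalIntegrable
    have : Continuous fun t : ℝ => ∑ m ∈ Finset.range k,
        (-1 : ℝ) ^ m * (t^2) ^ (2 * m) / (Nat.factorial (2 * m)) := by
      apply continuous_finset_sum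
      intro m _
      fun_prop
    exact this.congr (fun t => by rw [csum_def])
  have hC : IntervalIntegrable (fun t : ℝ => Real.cos (t^2)) volume 0 2 :=
    Continuous.intervalIntegrable (by fun_prop) _ _
  constructor
  · have hmono : (∫ t in (0:ℝ)..2, csum 8 (t^2)) ≤ ∫ t in (0:ℝ)..2, Real.cos (t^2) := by
      apply intervalIntegral.integral_mono_on (by norm_num) (hcont 8) hC
      intro t _
      exact csum_even_le_cos 3 (t^2)
    refine le_trans ?_ hmono
    rw [int_csum_sq]
    norm_num [Finset.sum_range_succ, Nat.factorial]
  · have hmono : (∫ t in (0:ℝ)..2, Real.cos (t^2)) ≤ ∫ t in (0:ℝ)..2, csum 7 (t^2) := by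
      apply intervalIntegral.integral_mono_on (by norm_num) hC (hcont 7)
      intro t _
      exact cos_le_csum_odd 3 (t^2)
    refine le_trans hmono ?_
    rw [int_csum_sq]
    norm_num [Finset.sum_range_succ, Nat.factorial]

lemma Fs2_bounds : (0.8047 : ℝ) ≤ (∫ t in (0:ℝ)..2, Real.sin (t^2))
    ∧ (∫ t in (0:ℝ)..2, Real.sin (t^2)) ≤ 0.8049 := by
  have hcont : ∀ k : ℕ, IntervalIntegrable (fun t : ℝ => ssum k (t^2)) volume 0 2 := by
    intro k
    apply Continuous.intervalIntegrable
    have : Continuous fun t : ℝ => ∑ m ∈ Finset.range k,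
        (-1 : ℝ) ^ m * (t^2) ^ (2 * m + 1) / (Nat.factorial (2 * m + 1)) := by
      apply continuous_finset_sum
      intro m _
      fun_prop
    exact this.congr (fun t => by rw [ssum_def])
  have hC : IntervalIntegrable (fun t : ℝ => Real.sin (t^2)) volume 0 2 :=
    Continuous.intervalIntegrable (by fun_prop) _ _
  constructor
  · have hmono : (∫ t in (0:ℝ)..2, ssum 8 (t^2)) ≤ ∫ t in (0:ℝ)..2, Real.sin (t^2) := by
      apply intervalIntegral.integral_mono_on (by norm_num) (hcont 8) hC
      intro t _
      exact ssum_even_le_sin 3 (sq_nonneg t)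
    refine le_trans ?_ hmono
    rw [int_ssum_sq]
    norm_num [Finset.sum_range_succ, Nat.factorial]
  · have hmono : (∫ t in (0:ℝ)..2, Real.sin (t^2)) ≤ ∫ t in (0:ℝ)..2, ssum 7 (t^2) := by
      apply intervalIntegral.integral_mono_on (by norm_num) hC (hcont 7)
      intro t _
      exact sin_le_ssum_odd 3 (sq_nonneg t)
    refine le_trans hmono ?_
    rw [int_ssum_sq]
    norm_num [Finset.sum_range_succ, Nat.factorial]

lemma cos4_bounds : (-0.6537 : ℝ) ≤ Real.cos 4 ∧ Real.cos 4 ≤ -0.6536 := by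
  constructor
  · refine le_trans ?_ (csum_even_le_cos 4 4)
    rw [csum_def]
    norm_num [Finset.sum_range_succ, Nat.factorial]
  · refine le_trans (cos_le_csum_odd 4 4) ?_
    rw [csum_def]
    norm_num [Finset.sum_range_succ, Nat.factorial]

lemma sin4_bounds : (-0.7569 : ℝ) ≤ Real.sin 4 ∧ Real.sin 4 ≤ -0.7567 := by
  constructor
  · refine le_trans ?_ (ssum_even_le_sin 3 (by norm_num : (0:ℝ) ≤ 4))
    rw [ssum_def]
    norm_num [Finset.sum_range_succ, Nat.factorial]
  · refine le_trans (sin_le_ssum_odd 4 (by norm_num : (0:ℝ) ≤ 4)) ?_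
    rw [ssum_def]
    norm_num [Finset.sum_range_succ, Nat.factorial]

lemma head (x : ℝ) : |(∫ t in (0:ℝ)..2, Real.cos (x - t^2)) + Real.sin (x-4)/4| ≤ 0.9142 := by
  have hsplit : (∫ t in (0:ℝ)..2, Real.cos (x - t^2))
      = Real.cos x * (∫ t in (0:ℝ)..2, Real.cos (t^2))
        + Real.sin x * (∫ t in (0:ℝ)..2, Real.sin (t^2)) := by
    have hpt : ∀ t : ℝ, Real.cos (x - t^2)
        = Real.cos x * Real.cos (t^2) + Real.sin x * Real.sin (t^2) := by
      intro t
      rw [Real.cos_sub]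
    simp only [hpt]
    rw [intervalIntegral.integral_add
      (Continuous.intervalIntegrable (by fun_prop) _ _)
      (Continuous.intervalIntegrable (by fun_prop) _ _),
      intervalIntegral.integral_const_mul, intervalIntegral.integral_const_mul]
  have hexp : Real.sin (x-4) = Real.sin x * Real.cos 4 - Real.cos x * Real.sin 4 :=
    Real.sin_sub x 4
  obtain ⟨a, ha⟩ : ∃ a : ℝ, a = (∫ t in (0:ℝ)..2, Real.cos (t^2)) - Real.sin 4 / 4 := ⟨_, rfl⟩
  obtain ⟨b, hb⟩ : ∃ b : ℝ, b = (∫ t in (0:ℝ)..2, Real.sin (t^2)) + Real.cos 4 / 4 := ⟨_, rfl⟩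
  have hcomb : (∫ t in (0:ℝ)..2, Real.cos (x - t^2)) + Real.sin (x-4)/4
      = Real.cos x * a + Real.sin x * b := by
    rw [hsplit, hexp, ha, hb]
    ring
  rw [hcomb]
  have hab : a^2 + b^2 ≤ 0.83558 := by
    have h1 := Fc2_bounds
    have h2 := Fs2_bounds
    have h3 := cos4_bounds
    have h4 := sin4_bounds
    have haL : (0.6505 : ℝ) ≤ a := by rw [ha]; linarith [h1.1, h4.2]
    have haU : a ≤ (0.651 : ℝ) := by rw [ha]; linarith [h1.2, h4.1]
    have hbL : (0.6412 : ℝ) ≤ b := by rw [hb]; linarith [h2.1, h3.1]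
    have hbU : b ≤ (0.6415 : ℝ) := by rw [hb]; linarith [h2.2, h3.2]
    nlinarith
  have hsq : (Real.cos x * a + Real.sin x * b)^2 ≤ a^2 + b^2 := by
    nlinarith [sq_nonneg (a * Real.sin x - b * Real.cos x), Real.sin_sq_add_cos_sq x]
  rw [abs_le]
  constructor
  · nlinarith [hsq, hab, sq_nonneg (Real.cos x * a + Real.sin x * b + 0.9142)]
  · nlinarith [hsq, hab, sq_nonneg (Real.cos x * a + Real.sin x * b - 0.9142)]

lemma regE {x : ℝ} (hx : 4 ≤ x) : x * J0 x ^ 2 ≤ 1 := by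
  have hx0 : (0:ℝ) < x := by linarith
  set y := Real.sqrt x with hy_def
  have hy0 : 0 ≤ y := Real.sqrt_nonneg x
  have hyx : y^2 = x := Real.sq_sqrt hx0.le
  have hy2 : 2 ≤ y := by nlinarith
  have hy0' : (0:ℝ) < y := by linarith
  -- main oscillatory integral bound
  have hI1 : |∫ v in (0:ℝ)..1, Real.cos (x*(1-v^2))| ≤ 0.977 / y := by
    rw [scale hy0' hyx]
    have hadj : (∫ t in (0:ℝ)..y, Real.cos (x - t^2))
        = (∫ t in (0:ℝ)..2, Real.cos (x - t^2)) + ∫ t in (2:ℝ)..y, Real.cos (x - t^2) := by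
      rw [intervalIntegral.integral_add_adjacent_intervals
        (Continuous.intervalIntegrable (by fun_prop) _ _)
        (Continuous.intervalIntegrable (by fun_prop) _ _)]
    have hfull : |∫ t in (0:ℝ)..y, Real.cos (x - t^2)| ≤ 0.977 := by
      rw [hadj, tail1 hy2 hyx]
      have habs := abs_le.mp (head x)
      have habs2 := abs_le.mp (tail2 hy2 hyx)
      rw [abs_le]
      constructor
      · nlinarith [habs.1, habs2.2]
      · nlinarith [habs.2, habs2.1]
    rw [abs_mul, abs_of_pos (inv_pos.mpr hy0'), div_eq_mul_inv, mul_comm (0.977:ℝ)]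
    exact mul_le_mul_of_nonneg_left hfull (by positivity)
  have hI2 := hpart (x := x) hx0
  -- representation and split
  have hrep : π * J0 x = 2 * ∫ v in (0:ℝ)..1,
      (Real.sqrt 2 * (Real.sqrt (1 - v^2/2))⁻¹) * Real.cos (x * (1 - v^2)) := by
    rw [pi_J0', fold, subst]
  have hint2 : IntervalIntegrable
      (fun v => ((Real.sqrt (1 - v^2/2))⁻¹ - 1) * Real.cos (x*(1-v^2))) volume 0 1 := by
    apply ContinuousOn.intervalIntegrable
    rw [Set.uIcc_of_le (by norm_num : (0:ℝ) ≤ 1)]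
    apply ContinuousOn.mul _ (by fun_prop)
    apply ContinuousOn.sub _ continuousOn_const
    apply ContinuousOn.inv₀ ((Real.continuous_sqrt.comp (by fun_prop)).continuousOn)
    intro v hv
    exact ne_of_gt (m_pos hv.1 hv.2)
  have hIsplit : (∫ v in (0:ℝ)..1, (Real.sqrt 2 * (Real.sqrt (1 - v^2/2))⁻¹) * Real.cos (x * (1 - v^2)))
      = Real.sqrt 2 * (∫ v in (0:ℝ)..1, Real.cos (x*(1-v^2)))
        + Real.sqrt 2 * (∫ v in (0:ℝ)..1, ((Real.sqrt (1 - v^2/2))⁻¹ - 1) * Real.cos (x*(1-v^2))) := by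
    have hpt : ∀ v : ℝ, (Real.sqrt 2 * (Real.sqrt (1 - v^2/2))⁻¹) * Real.cos (x * (1 - v^2))
        = Real.sqrt 2 * Real.cos (x*(1-v^2))
          + Real.sqrt 2 * (((Real.sqrt (1 - v^2/2))⁻¹ - 1) * Real.cos (x*(1-v^2))) := by
      intro v
      ring
    simp only [hpt]
    rw [intervalIntegral.integral_add
      (Continuous.intervalIntegrable (by fun_prop) _ _)
      (hint2.const_mul _),
      intervalIntegral.integral_const_mul, intervalIntegral.integral_const_mul]
  -- final numeric assembly
  have habsJ : π * |J0 x| ≤ 2 * (Real.sqrt 2 * (0.977/y) + Real.sqrt 2 * (5/(24*x))) := by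
    have h1 : |π * J0 x| = π * |J0 x| := by
      rw [abs_mul, abs_of_pos Real.pi_pos]
    rw [← h1, hrep, hIsplit]
    have h2 : |2 * (Real.sqrt 2 * (∫ v in (0:ℝ)..1, Real.cos (x*(1-v^2)))
        + Real.sqrt 2 * (∫ v in (0:ℝ)..1, ((Real.sqrt (1 - v^2/2))⁻¹ - 1) * Real.cos (x*(1-v^2))))|
        ≤ 2 * (Real.sqrt 2 * |∫ v in (0:ℝ)..1, Real.cos (x*(1-v^2))|
          + Real.sqrt 2 * |∫ v in (0:ℝ)..1, ((Real.sqrt (1 - v^2/2))⁻¹ - 1) * Real.cos (x*(1-v^2))|) := by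
      rw [abs_mul, abs_of_pos (by norm_num : (0:ℝ) < 2)]
      have := abs_add_le (Real.sqrt 2 * (∫ v in (0:ℝ)..1, Real.cos (x*(1-v^2))))
        (Real.sqrt 2 * (∫ v in (0:ℝ)..1, ((Real.sqrt (1 - v^2/2))⁻¹ - 1) * Real.cos (x*(1-v^2))))
      rw [abs_mul, abs_mul, abs_of_pos sqrt2_pos] at this
      linarith
    refine le_trans h2 ?_
    have hs2 := sqrt2_pos
    nlinarith [hI1, hI2, mul_le_mul_of_nonneg_left hI1 hs2.le,
      mul_le_mul_of_nonneg_left hI2 hs2.le]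
  have hyJ : y * |J0 x| ≤ 1 := by
    by_contra hcon
    push_neg at hcon
    have hyx' : 5/(24*x) * y = 5/(24*y) := by
      rw [← hyx]
      field_simp
    have hchain : π * (y * |J0 x|) ≤ 2 * (Real.sqrt 2 * 0.977 + Real.sqrt 2 * (5/(24*y))) := by
      have := mul_le_mul_of_nonneg_right habsJ hy0
      calc π * (y * |J0 x|) = π * |J0 x| * y := by ring
        _ ≤ 2 * (Real.sqrt 2 * (0.977/y) + Real.sqrt 2 * (5/(24*x))) * y := this
        _ = 2 * (Real.sqrt 2 * (0.977/y*y) + Real.sqrt 2 * (5/(24*x)*y)) := by ring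
        _ = 2 * (Real.sqrt 2 * 0.977 + Real.sqrt 2 * (5/(24*y))) := by
            rw [hyx', div_mul_cancel₀ _ (ne_of_gt hy0')]
    have h524 : 5/(24*y) ≤ 5/48 := by
      rw [div_le_div_iff₀ (by positivity) (by norm_num)]
      nlinarith
    have hub : 2 * (Real.sqrt 2 * 0.977 + Real.sqrt 2 * (5/(24*y))) ≤ 3.06 := by
      nlinarith [sqrt2_ub, sqrt2_pos, h524]
    have hπ : π * 1 < π * (y * |J0 x|) := by
      nlinarith [Real.pi_pos]
    have := Real.pi_gt_d6
    linarith
  have hfin : (y * |J0 x|)^2 ≤ 1 := by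
    nlinarith [mul_nonneg hy0 (abs_nonneg (J0 x))]
  calc x * J0 x ^ 2 = (y * |J0 x|)^2 := by
        rw [mul_pow, sq_abs, hyx]
    _ ≤ 1 := hfin


lemma xJ0sq_le_one {x : ℝ} (hx : 0 < x) : x * J0 x ^ 2 ≤ 1 := by
  rcases le_or_gt x 1 with h | h
  · exact regA hx h
  rcases le_or_gt x (17/10) with h2 | h2
  · exact regB h.le h2
  rcases le_or_gt x (5/2) with h3 | h3
  · exact regC h2.le h3
  rcases le_or_gt x 4 with h4 | h4
  · exact regD h3.le h4
  · exact regE h4.le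

lemma key_pointwise {u r : ℝ} (hu : 0 < u) (hr : 1 ≤ r) :
    J0 (r * u) ^ 2 * (1 + r^2) ^ ((1:ℝ)/2) ≤ Real.sqrt 2 / u := by
  have hr0 : 0 < r := by linarith
  have hru : 0 < r * u := mul_pos hr0 hu
  have hJ := xJ0sq_le_one hru
  have hsq : (1 + r^2 : ℝ) ^ ((1:ℝ)/2) ≤ Real.sqrt 2 * r := by
    rw [← Real.sqrt_eq_rpow]
    have h1 : (1 + r^2 : ℝ) ≤ 2 * r^2 := by nlinarith
    have h2 : Real.sqrt (1 + r^2) ≤ Real.sqrt (2 * r^2) := Real.sqrt_le_sqrt h1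
    have h3 : Real.sqrt (2 * r^2) = Real.sqrt 2 * r := by
      rw [Real.sqrt_mul (by norm_num : (0:ℝ) ≤ 2), Real.sqrt_sq hr0.le]
    linarith
  have hJ2 : J0 (r*u) ^ 2 ≤ 1 / (r * u) := by
    rw [le_div_iff₀ hru]
    linarith [hJ]
  have hpow : (0:ℝ) ≤ (1 + r^2) ^ ((1:ℝ)/2) := Real.rpow_nonneg (by positivity) _
  calc J0 (r * u) ^ 2 * (1 + r^2) ^ ((1:ℝ)/2)
      ≤ (1 / (r * u)) * (Real.sqrt 2 * r) := by
        apply mul_le_mul hJ2 hsq hpow (by positivity)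
    _ = Real.sqrt 2 / u := by
        field_simp

end GyroAux

/-- Fourier-coefficient form of the smoothing estimate
`‖J⁰_u Φ‖_{H^{s+1/2}} ≤ 2^{1/4} u^{-1/2} ‖Φ‖_{H^s}` for mean-zero `Φ` on `𝕋²`:
take `c k = |Φ̂(k)|²`. -/
theorem gyroaverage_smoothing (u : ℝ) (hu : 0 < u) (s : ℝ)
    (c : {k : ℤ × ℤ // k ≠ 0} → ℝ) (hc : ∀ k, 0 ≤ c k) :
    ∑' k : {k : ℤ × ℤ // k ≠ 0},
        ENNReal.ofReal ((J0 (eNorm k.1 * u)) ^ 2 * (1 + eNorm k.1 ^ 2) ^ (s + 1/2) * c k)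
      ≤ ENNReal.ofReal (Real.sqrt 2 / u) *
        ∑' k : {k : ℤ × ℤ // k ≠ 0},
          ENNReal.ofReal ((1 + eNorm k.1 ^ 2) ^ s * c k) := by
  rw [← ENNReal.tsum_mul_left]
  apply ENNReal.tsum_le_tsum
  intro k
  have hr1 : 1 ≤ eNorm k.1 := by
    rw [eNorm]
    rw [show (1:ℝ) = Real.sqrt 1 from (Real.sqrt_one).symm]
    apply Real.sqrt_le_sqrt
    have hk := k.prop
    have : k.1.1 ≠ 0 ∨ k.1.2 ≠ 0 := by
      by_contra hcon
      push_neg at hcon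
      exact hk (Prod.ext hcon.1 hcon.2)
    rcases this with h | h
    · have h1 : (1:ℤ) ≤ k.1.1^2 := by
        rcases lt_or_gt_of_ne h with hl | hl <;> nlinarith
      have h2 : (1:ℝ) ≤ (k.1.1:ℝ)^2 := by exact_mod_cast h1
      nlinarith [sq_nonneg ((k.1.2 : ℝ))]
    · have h1 : (1:ℤ) ≤ k.1.2^2 := by
        rcases lt_or_gt_of_ne h with hl | hl <;> nlinarith
      have h2 : (1:ℝ) ≤ (k.1.2:ℝ)^2 := by exact_mod_cast h1
      nlinarith [sq_nonneg ((k.1.1 : ℝ))]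
  obtain ⟨r, hr_def⟩ : ∃ r : ℝ, r = eNorm k.1 := ⟨_, rfl⟩
  rw [← hr_def] at hr1 ⊢
  have hrpos : (0:ℝ) < 1 + r^2 := by positivity
  have hkey : (J0 (r * u)) ^ 2 * (1 + r ^ 2) ^ (s + 1/2) * c k
      ≤ (Real.sqrt 2 / u) * ((1 + r ^ 2) ^ s * c k) := by
    have hmain := GyroAux.key_pointwise hu hr1
    have hsplit : (1 + r ^ 2 : ℝ) ^ (s + 1/2)
        = (1 + r ^ 2) ^ s * (1 + r ^ 2) ^ ((1:ℝ)/2) := by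
      rw [← Real.rpow_add hrpos]
    calc (J0 (r * u)) ^ 2 * (1 + r ^ 2) ^ (s + 1/2) * c k
        = (J0 (r * u) ^ 2 * (1 + r ^ 2) ^ ((1:ℝ)/2)) * ((1 + r ^ 2) ^ s * c k) := by
          rw [hsplit]; ring
      _ ≤ (Real.sqrt 2 / u) * ((1 + r ^ 2) ^ s * c k) := by
          apply mul_le_mul_of_nonneg_right hmain
          exact mul_nonneg (Real.rpow_nonneg hrpos.le _) (hc k)
  calc ENNReal.ofReal ((J0 (r * u)) ^ 2 * (1 + r ^ 2) ^ (s + 1/2) * c k)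
      ≤ ENNReal.ofReal ((Real.sqrt 2 / u) * ((1 + r ^ 2) ^ s * c k)) :=
        ENNReal.ofReal_le_ofReal hkey
    _ = ENNReal.ofReal (Real.sqrt 2 / u) * ENNReal.ofReal ((1 + r ^ 2) ^ s * c k) :=
        ENNReal.ofReal_mul (by positivity)
end

section
/- For every u > 0, every s ∈ ℝ, and every family of nonnegative reals (c_k) indexed by the nonzero elements k of ℤ², one has Σ_{k ≠ 0} ‖k‖² · ((J⁰)'(‖k‖·u))² · (1 + ‖k‖²)^s · c_k ≤ (1/u) · Σ_{k ≠ 0} (1 + ‖k‖²)^{s + 1/2} · c_k (sums taken as tsums in [0,∞]). This is the Fourier-coefficient form of the estimate ‖∂_u (J⁰_u Φ)‖_{H^s} ≤ u^{-1/2} ‖Φ‖_{H^{s+1/2}} for mean-zero Φ on the torus 𝕋². -/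
open MeasureTheory Real ENNReal

noncomputable def J1 (k : ℝ) : ℝ :=
  (1 / Real.pi) * ∫ θ in (0:ℝ)..Real.pi, Real.cos θ * Real.sin (k * Real.cos θ)

noncomputable def J2 (k : ℝ) : ℝ :=
  (1 / Real.pi) * ∫ θ in (0:ℝ)..Real.pi, (Real.cos θ)^2 * Real.cos (k * Real.cos θ)

lemma hasDerivAt_J0 (x : ℝ) : HasDerivAt J0 (-(J1 x)) x := by
  have h := intervalIntegral.hasDerivAt_integral_of_dominated_loc_of_deriv_le
    (F := fun x θ => Real.cos (x * Real.cos θ))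
    (F' := fun x θ => -(Real.cos θ * Real.sin (x * Real.cos θ)))
    (x₀ := x) (a := 0) (b := Real.pi) (μ := MeasureTheory.volume) (s := Set.univ) (bound := fun _ => 1)
    (Filter.univ_mem)
    (Filter.Eventually.of_forall fun y =>
      (Continuous.aestronglyMeasurable (by fun_prop)))
    ((Continuous.intervalIntegrable (by fun_prop) _ _))
    (Continuous.aestronglyMeasurable (by fun_prop))
    (Filter.Eventually.of_forall fun t _ y _ => by
      simp only [norm_neg, Real.norm_eq_abs, abs_mul]
      exact mul_le_one₀ (Real.abs_cos_le_one t) (abs_nonneg _) (Real.abs_sin_le_one _))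
    ((Continuous.intervalIntegrable continuous_const _ _))
    (Filter.Eventually.of_forall fun t _ y _ => by
      have : HasDerivAt (fun z : ℝ => z * Real.cos t) (Real.cos t) y := by
        simpa using (hasDerivAt_id y).mul_const (Real.cos t)
      simpa [mul_comm, Function.comp_def] using (Real.hasDerivAt_cos (y * Real.cos t)).comp y this)
  have h2 := h.2.const_mul (1 / Real.pi)
  have : (1 / Real.pi) * ∫ θ in (0:ℝ)..Real.pi, -(Real.cos θ * Real.sin (x * Real.cos θ))
      = -(J1 x) := by
    rw [intervalIntegral.integral_neg]; simp [J1]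
  rw [this] at h2
  exact h2

lemma hasDerivAt_J1 (x : ℝ) : HasDerivAt J1 (J2 x) x := by
  have h := intervalIntegral.hasDerivAt_integral_of_dominated_loc_of_deriv_le
    (F := fun x θ => Real.cos θ * Real.sin (x * Real.cos θ))
    (F' := fun x θ => (Real.cos θ)^2 * Real.cos (x * Real.cos θ))
    (x₀ := x) (a := 0) (b := Real.pi) (μ := MeasureTheory.volume) (s := Set.univ) (bound := fun _ => 1)
    (Filter.univ_mem)
    (Filter.Eventually.of_forall fun y =>
      (Continuous.aestronglyMeasurable (by fun_prop)))
    ((Continuous.intervalIntegrable (by fun_prop) _ _))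
    (Continuous.aestronglyMeasurable (by fun_prop))
    (Filter.Eventually.of_forall fun t _ y _ => by
      simp only [Real.norm_eq_abs, abs_mul, abs_pow]
      have h2 : |Real.cos t| ^ 2 ≤ 1 := by
        have := Real.abs_cos_le_one t
        calc |Real.cos t| ^ 2 ≤ 1 ^ 2 := pow_le_pow_left₀ (abs_nonneg _) this 2
        _ = 1 := one_pow 2
      exact mul_le_one₀ h2 (abs_nonneg _) (Real.abs_cos_le_one _))
    ((Continuous.intervalIntegrable continuous_const _ _))
    (Filter.Eventually.of_forall fun t _ y _ => by
      have hid : HasDerivAt (fun z : ℝ => z * Real.cos t) (Real.cos t) y := by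
        simpa using (hasDerivAt_id y).mul_const (Real.cos t)
      have := ((Real.hasDerivAt_sin (y * Real.cos t)).comp y hid).const_mul (Real.cos t)
      refine this.congr_deriv ?_
      ring)
  have h2 := h.2.const_mul (1 / Real.pi)
  exact h2

-- FTC identity: ∫ d/dθ (sin θ * sin (x cos θ)) = 0 gives π J1 x = x (π J0 x - π J2 x)
lemma J2_eq (x : ℝ) (hx : x ≠ 0) : J2 x = J0 x - J1 x / x := by
  have key : (∫ θ in (0:ℝ)..Real.pi,
      (Real.cos θ * Real.sin (x * Real.cos θ)
        - x * (Real.sin θ)^2 * Real.cos (x * Real.cos θ))) = 0 := by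
    have hder : ∀ θ ∈ Set.uIcc (0:ℝ) Real.pi,
        HasDerivAt (fun t => Real.sin t * Real.sin (x * Real.cos t))
          (Real.cos θ * Real.sin (x * Real.cos θ)
            - x * (Real.sin θ)^2 * Real.cos (x * Real.cos θ)) θ := by
      intro θ _
      have h1 : HasDerivAt (fun t : ℝ => x * Real.cos t) (x * (-Real.sin θ)) θ :=
        (Real.hasDerivAt_cos θ).const_mul x
      have h2 : HasDerivAt (fun t : ℝ => Real.sin (x * Real.cos t))
          (Real.cos (x * Real.cos θ) * (x * (-Real.sin θ))) θ := by
        have := (Real.hasDerivAt_sin (x * Real.cos θ)).comp θ h1; exact this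
      have h3 := (Real.hasDerivAt_sin θ).mul h2
      refine h3.congr_deriv ?_
      ring
    have hcont : ContinuousOn (fun θ : ℝ => Real.cos θ * Real.sin (x * Real.cos θ)
        - x * (Real.sin θ)^2 * Real.cos (x * Real.cos θ)) (Set.uIcc (0:ℝ) Real.pi) :=
      (Continuous.continuousOn (by fun_prop))
    have := intervalIntegral.integral_eq_sub_of_hasDerivAt hder
      ((ContinuousOn.intervalIntegrable hcont))
    rw [this]; simp
  have hsplit : (∫ θ in (0:ℝ)..Real.pi, Real.cos θ * Real.sin (x * Real.cos θ))
      = x * ((∫ θ in (0:ℝ)..Real.pi, Real.cos (x * Real.cos θ))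
        - (∫ θ in (0:ℝ)..Real.pi, (Real.cos θ)^2 * Real.cos (x * Real.cos θ))) := by
    have h1 : (∫ θ in (0:ℝ)..Real.pi, Real.cos θ * Real.sin (x * Real.cos θ))
        = ∫ θ in (0:ℝ)..Real.pi, x * (Real.sin θ)^2 * Real.cos (x * Real.cos θ) := by
      have hA : IntervalIntegrable (fun θ : ℝ => Real.cos θ * Real.sin (x * Real.cos θ))
          MeasureTheory.volume 0 Real.pi :=
        Continuous.intervalIntegrable (by fun_prop) 0 Real.pi
      have hB : IntervalIntegrable (fun θ : ℝ => x * (Real.sin θ)^2 * Real.cos (x * Real.cos θ))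
          MeasureTheory.volume 0 Real.pi :=
        Continuous.intervalIntegrable (by fun_prop) 0 Real.pi
      have := intervalIntegral.integral_sub hA hB
      rw [key] at this
      linarith [this]
    rw [h1]
    have h2 : ∀ θ : ℝ, x * (Real.sin θ)^2 * Real.cos (x * Real.cos θ)
        = x * (Real.cos (x * Real.cos θ) - (Real.cos θ)^2 * Real.cos (x * Real.cos θ)) := by
      intro θ
      have : (Real.sin θ)^2 = 1 - (Real.cos θ)^2 := Real.sin_sq θ
      rw [this]; ring
    simp_rw [h2]
    have hC : IntervalIntegrable (fun θ : ℝ => Real.cos (x * Real.cos θ))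
        MeasureTheory.volume 0 Real.pi :=
      Continuous.intervalIntegrable (by fun_prop) 0 Real.pi
    have hD : IntervalIntegrable (fun θ : ℝ => (Real.cos θ)^2 * Real.cos (x * Real.cos θ))
        MeasureTheory.volume 0 Real.pi :=
      Continuous.intervalIntegrable (by fun_prop) 0 Real.pi
    rw [intervalIntegral.integral_const_mul, intervalIntegral.integral_sub hC hD]
  have hpi : (Real.pi : ℝ) ≠ 0 := Real.pi_ne_zero
  simp only [J0, J1, J2]
  rw [hsplit]
  field_simp
  ring
  simp only [mul_comm (Real.cos _) x]

lemma wallis (n : ℕ) : (∫ θ in (0:ℝ)..Real.pi, Real.cos θ ^ (2*n))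
    = Real.pi * ∏ i ∈ Finset.range n, ((2*(i:ℝ)+1)/(2*(i:ℝ)+2)) := by
  induction n with
  | zero => simp
  | succ k ih =>
    have h : 2*(k+1) = (2*k) + 2 := by ring
    rw [h, integral_cos_pow]
    rw [ih, Finset.prod_range_succ]
    simp [Real.sin_pi]
    push_cast
    ring

lemma prod_odd_even (m : ℕ) : (∏ i ∈ Finset.range m, ((2*(i:ℝ)+1)/(2*(i:ℝ)+2)))
    = ((2*m).factorial : ℝ) / (4^m * ((m.factorial:ℝ))^2) := by
  induction m with
  | zero => simp
  | succ k ih =>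
    rw [Finset.prod_range_succ, ih]
    have h1 : (2*(k+1)) = (2*k+1) + 1 := by ring
    rw [h1]
    rw [Nat.factorial_succ, Nat.factorial_succ, Nat.factorial_succ]
    push_cast
    have hk : ((2*k).factorial : ℝ) ≠ 0 := Nat.cast_ne_zero.mpr (Nat.factorial_ne_zero _)
    have hk2 : ((k.factorial : ℝ)) ≠ 0 := Nat.cast_ne_zero.mpr (Nat.factorial_ne_zero _)
    field_simp
    ring

lemma summable_aux (y : ℝ) (g : ℕ → ℕ) (hg : ∀ m, m ≤ g m) :
    Summable (fun m : ℕ => |y|^m / ((g m).factorial : ℝ)) := by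
  apply Summable.of_nonneg_of_le (fun m => by positivity)
    (fun m => ?_) (Real.summable_pow_div_factorial |y|)
  have h1 : (m.factorial : ℝ) ≤ ((g m).factorial : ℝ) := by
    exact_mod_cast Nat.factorial_le (hg m)
  have h2 : (0:ℝ) < (m.factorial : ℝ) := by positivity
  have := abs_nonneg y
  apply div_le_div_of_nonneg_left (by positivity) h2 h1 |>.trans_eq rfl
  

lemma coscos_integrable (f : ℝ → ℝ) (hf : Continuous f) :
    MeasureTheory.IntegrableOn f (Set.Ioc (0:ℝ) Real.pi) MeasureTheory.volume :=
  Continuous.integrableOn_Ioc hf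

-- generic interchange lemma
lemma interchange (F : ℕ → ℝ → ℝ) (hFc : ∀ m, Continuous (F m)) (B : ℕ → ℝ)
    (hB : ∀ m, ∀ θ ∈ Set.Ioc (0:ℝ) Real.pi, ‖F m θ‖ ≤ B m) (hBs : Summable B)
    (hBnn : ∀ m, 0 ≤ B m) :
    ∑' m : ℕ, (∫ θ in (0:ℝ)..Real.pi, F m θ) = ∫ θ in (0:ℝ)..Real.pi, (∑' m, F m θ) := by
  have hpi := Real.pi_pos
  have hInt : ∀ m, MeasureTheory.Integrable (F m)
      (MeasureTheory.volume.restrict (Set.Ioc (0:ℝ) Real.pi)) :=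
    fun m => coscos_integrable _ (hFc m)
  have hbound : ∀ m, (∫ θ in Set.Ioc (0:ℝ) Real.pi, ‖F m θ‖) ≤ Real.pi * B m := by
    intro m
    have h1 : (∫ θ in Set.Ioc (0:ℝ) Real.pi, ‖F m θ‖)
        = ∫ θ in (0:ℝ)..Real.pi, ‖F m θ‖ := by
      rw [intervalIntegral.integral_of_le hpi.le]
    rw [h1]
    have h2 : ‖∫ θ in (0:ℝ)..Real.pi, ‖F m θ‖‖ ≤ B m * |Real.pi - 0| := by
      apply intervalIntegral.norm_integral_le_of_norm_le_const
      intro θ hθ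
      rw [Set.uIoc_of_le hpi.le] at hθ
      rw [norm_norm]
      exact hB m θ hθ
    rw [abs_of_pos (by linarith), sub_zero] at h2
    calc (∫ θ in (0:ℝ)..Real.pi, ‖F m θ‖) ≤ ‖∫ θ in (0:ℝ)..Real.pi, ‖F m θ‖‖ :=
          le_abs_self _
      _ ≤ B m * Real.pi := h2
      _ = Real.pi * B m := mul_comm _ _
  have hsum2 : Summable (fun m => ∫ θ in Set.Ioc (0:ℝ) Real.pi, ‖F m θ‖) := by
    apply Summable.of_nonneg_of_le
      (fun m => MeasureTheory.integral_nonneg (fun θ => norm_nonneg _)) hbound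
      (hBs.mul_left Real.pi)
  have key := MeasureTheory.integral_tsum_of_summable_integral_norm hInt hsum2
  simp_rw [intervalIntegral.integral_of_le hpi.le]
  exact key


lemma div_le_div_of_nonneg_right' {a b c : ℝ} (h : a ≤ b) (hc : 0 < c) : a / c ≤ b / c :=
  (div_le_div_iff_of_pos_right hc).mpr h

lemma J0_series (x : ℝ) :
    J0 x = ∑' m : ℕ, (-1)^m * (x^2/4)^m / ((m.factorial : ℝ) * m.factorial) := by
  have hpi := Real.pi_pos
  set F : ℕ → ℝ → ℝ :=
    fun m θ => (-1)^m * (x * Real.cos θ)^(2*m) / ((2*m).factorial : ℝ) with hF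
  have habs : ∀ (θ : ℝ) (m : ℕ), |x * Real.cos θ|^(2*m) ≤ |x^2|^m := by
    intro θ m
    have h1 : |x * Real.cos θ| ≤ |x| := by
      rw [abs_mul]
      exact mul_le_of_le_one_right (abs_nonneg x) (Real.abs_cos_le_one θ)
    calc |x * Real.cos θ|^(2*m) ≤ |x|^(2*m) :=
          pow_le_pow_left₀ (abs_nonneg _) h1 (2*m)
      _ = (|x|^2)^m := by rw [pow_mul]
      _ = |x^2|^m := by rw [sq_abs, abs_of_nonneg (sq_nonneg x)]
  have hB : ∀ m, ∀ θ ∈ Set.Ioc (0:ℝ) Real.pi,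
      ‖F m θ‖ ≤ |x^2|^m / ((2*m).factorial : ℝ) := by
    intro m θ _
    have h1 : ‖F m θ‖ = |x * Real.cos θ|^(2*m) / ((2*m).factorial : ℝ) := by
      simp only [hF]
      simp [abs_div, abs_mul, abs_pow, Nat.abs_cast]
    rw [h1]
    exact div_le_div_of_nonneg_right' (habs θ m) (Nat.cast_pos.mpr (Nat.factorial_pos _))
  have hFc : ∀ m, Continuous (F m) := fun m => by simp only [hF]; fun_prop
  have hBs : Summable (fun m : ℕ => |x^2|^m / ((2*m).factorial : ℝ)) := by
    exact summable_aux (x^2) (fun m => 2*m) (fun m => by omega)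
  have hint := interchange F hFc _ hB hBs (fun m => by positivity)
  have hpt : ∀ θ : ℝ, (∑' m, F m θ) = Real.cos (x * Real.cos θ) :=
    fun θ => (Real.hasSum_cos (x * Real.cos θ)).tsum_eq
  have hI : ∀ m : ℕ, (∫ θ in (0:ℝ)..Real.pi, F m θ)
      = (-1)^m * x^(2*m) / ((2*m).factorial : ℝ)
        * (Real.pi * ∏ i ∈ Finset.range m, ((2*(i:ℝ)+1)/(2*(i:ℝ)+2))) := by
    intro m
    have h2 : ∀ θ : ℝ, F m θ
        = ((-1)^m * x^(2*m) / ((2*m).factorial : ℝ)) * (Real.cos θ)^(2*m) := by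
      intro θ; simp only [hF]; rw [mul_pow]; ring
    simp_rw [h2]
    rw [intervalIntegral.integral_const_mul, wallis m]
  have hmain : J0 x = (1/Real.pi) * ∑' m, (∫ θ in (0:ℝ)..Real.pi, F m θ) := by
    rw [hint, J0]
    congr 1
    apply intervalIntegral.integral_congr
    intro θ _
    exact (hpt θ).symm
  rw [hmain, ← tsum_mul_left]
  apply tsum_congr
  intro m
  rw [hI m, prod_odd_even m]
  have h3 : ((2*m).factorial : ℝ) ≠ 0 := Nat.cast_ne_zero.mpr (Nat.factorial_ne_zero _)
  have h4 : ((m.factorial : ℝ)) ≠ 0 := Nat.cast_ne_zero.mpr (Nat.factorial_ne_zero _)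
  have h5 : x^(2*m) = (x^2)^m := by rw [pow_mul]
  have h6 : (x^2/4)^m = (x^2)^m / 4^m := div_pow _ _ m
  rw [h5, h6]
  have h7 : (4:ℝ)^m ≠ 0 := by positivity
  field_simp

lemma J1_series (x : ℝ) :
    J1 x = ∑' m : ℕ, (-1)^m * (x/2) * (x^2/4)^m
      / ((m.factorial : ℝ) * (m+1).factorial) := by
  have hpi := Real.pi_pos
  set F : ℕ → ℝ → ℝ :=
    fun m θ => Real.cos θ * ((-1)^m * (x * Real.cos θ)^(2*m+1) / ((2*m+1).factorial : ℝ))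
    with hF
  have habs : ∀ (θ : ℝ) (m : ℕ), |Real.cos θ| * |x * Real.cos θ|^(2*m+1) ≤ |x| * |x^2|^m := by
    intro θ m
    have h1 : |x * Real.cos θ| ≤ |x| := by
      rw [abs_mul]
      exact mul_le_of_le_one_right (abs_nonneg x) (Real.abs_cos_le_one θ)
    have h2 : |x * Real.cos θ|^(2*m+1) ≤ |x|^(2*m+1) :=
      pow_le_pow_left₀ (abs_nonneg _) h1 _
    have h3 : |x|^(2*m+1) = |x| * |x^2|^m := by
      rw [pow_succ, pow_mul, sq_abs, abs_of_nonneg (sq_nonneg x)]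
      ring
    calc |Real.cos θ| * |x * Real.cos θ|^(2*m+1)
        ≤ 1 * |x|^(2*m+1) :=
          mul_le_mul (Real.abs_cos_le_one θ) h2 (by positivity) zero_le_one
      _ = |x| * |x^2|^m := by rw [one_mul, h3]
  have hB : ∀ m, ∀ θ ∈ Set.Ioc (0:ℝ) Real.pi,
      ‖F m θ‖ ≤ |x| * |x^2|^m / ((2*m+1).factorial : ℝ) := by
    intro m θ _
    have h1 : ‖F m θ‖ = |Real.cos θ| * |x * Real.cos θ|^(2*m+1) / ((2*m+1).factorial : ℝ) := by
      simp only [hF]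
      simp [abs_div, abs_mul, abs_pow, Nat.abs_cast, mul_div_assoc]
    rw [h1]
    exact div_le_div_of_nonneg_right' (habs θ m) (Nat.cast_pos.mpr (Nat.factorial_pos _))
  have hFc : ∀ m, Continuous (F m) := fun m => by simp only [hF]; fun_prop
  have hBs : Summable (fun m : ℕ => |x| * |x^2|^m / ((2*m+1).factorial : ℝ)) := by
    have := (summable_aux (x^2) (fun m => 2*m+1) (fun m => by omega)).mul_left |x|
    simpa [mul_div_assoc] using this
  have hint := interchange F hFc _ hB hBs (fun m => by positivity)
  have hpt : ∀ θ : ℝ, (∑' m, F m θ)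
      = Real.cos θ * Real.sin (x * Real.cos θ) := by
    intro θ
    have := (Real.hasSum_sin (x * Real.cos θ)).mul_left (Real.cos θ)
    exact this.tsum_eq
  have hI : ∀ m : ℕ, (∫ θ in (0:ℝ)..Real.pi, F m θ)
      = (-1)^m * x^(2*m+1) / ((2*m+1).factorial : ℝ)
        * (Real.pi * ∏ i ∈ Finset.range (m+1), ((2*(i:ℝ)+1)/(2*(i:ℝ)+2))) := by
    intro m
    have h2 : ∀ θ : ℝ, F m θ
        = ((-1)^m * x^(2*m+1) / ((2*m+1).factorial : ℝ)) * (Real.cos θ)^(2*(m+1)) := by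
      intro θ
      simp only [hF]
      rw [mul_pow]
      have : (Real.cos θ) * (Real.cos θ)^(2*m+1) = (Real.cos θ)^(2*(m+1)) := by
        ring
      calc Real.cos θ * ((-1)^m * (x^(2*m+1) * Real.cos θ^(2*m+1)) / ((2*m+1).factorial : ℝ))
          = ((-1)^m * x^(2*m+1) / ((2*m+1).factorial : ℝ))
            * (Real.cos θ * Real.cos θ^(2*m+1)) := by ring
        _ = _ := by rw [this]
    simp_rw [h2]
    rw [intervalIntegral.integral_const_mul, wallis (m+1)]
  have hmain : J1 x = (1/Real.pi) * ∑' m, (∫ θ in (0:ℝ)..Real.pi, F m θ) := by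
    rw [hint, J1]
    congr 1
    apply intervalIntegral.integral_congr
    intro θ _
    exact (hpt θ).symm
  rw [hmain, ← tsum_mul_left]
  apply tsum_congr
  intro m
  rw [hI m, prod_odd_even (m+1)]
  have h3 : ((2*m+1).factorial : ℝ) ≠ 0 := Nat.cast_ne_zero.mpr (Nat.factorial_ne_zero _)
  have h4 : ((m.factorial : ℝ)) ≠ 0 := Nat.cast_ne_zero.mpr (Nat.factorial_ne_zero _)
  have h4' : (((m+1).factorial : ℝ)) ≠ 0 := Nat.cast_ne_zero.mpr (Nat.factorial_ne_zero _)
  have h5 : x^(2*m+1) = x * (x^2)^m := by rw [pow_succ', pow_mul]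
  have h6 : (x^2/4)^m = (x^2)^m / 4^m := div_pow _ _ m
  have hfac : ((2*(m+1)).factorial : ℝ) = (2*(m:ℝ)+2) * ((2*m+1).factorial : ℝ) := by
    have : 2*(m+1) = (2*m+1) + 1 := by ring
    rw [this, Nat.factorial_succ]
    push_cast
    ring
  have hfac2 : (((m+1).factorial : ℝ)) = ((m:ℝ)+1) * (m.factorial : ℝ) := by
    rw [Nat.factorial_succ]; push_cast; ring
  rw [h5, h6, hfac, hfac2]
  have h7 : (4:ℝ)^m ≠ 0 := by positivity
  have h8 : (2*(m:ℝ)+2) ≠ 0 := by positivity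
  have h9 : ((m:ℝ)+1) ≠ 0 := by positivity
  field_simp
  ring

lemma tail_half (f : ℕ → ℝ) (M : ℕ) (C : ℝ) (hC : 0 ≤ C) (hs : Summable f)
    (hb : ∀ m : ℕ, |f (m + M)| ≤ C * (1/2)^m) :
    |(∑' m, f m) - ∑ m ∈ Finset.range M, f m| ≤ 2*C := by
  have h1 := hs.sum_add_tsum_nat_add M
  have htails : Summable (fun m => f (m + M)) := (summable_nat_add_iff M).mpr hs
  have hsnorm : Summable (fun m => ‖f (m + M)‖) := by
    apply Summable.of_nonneg_of_le (fun m => norm_nonneg _) (fun m => hb m)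
    exact summable_geometric_two.mul_left C
  have h2 : |∑' m, f (m + M)| ≤ 2*C := by
    calc |∑' m, f (m + M)| = ‖∑' m, f (m + M)‖ := (Real.norm_eq_abs _).symm
      _ ≤ ∑' m, ‖f (m + M)‖ := norm_tsum_le_tsum_norm hsnorm
      _ ≤ ∑' m : ℕ, C * (1/2)^m := Summable.tsum_le_tsum hb hsnorm (summable_geometric_two.mul_left C)
      _ = C * 2 := by rw [tsum_mul_left, tsum_geometric_two]
      _ = 2*C := mul_comm _ _
  have h3 : (∑' m, f m) - ∑ m ∈ Finset.range M, f m = ∑' m, f (m + M) := by linarith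
  rw [h3]; exact h2

lemma fact_lower (M m : ℕ) : ((M.factorial : ℝ)) * ((M:ℝ)+1)^m ≤ ((m + M).factorial : ℝ) := by
  have := Nat.factorial_mul_pow_le_factorial (m := M) (n := m)
  have hcast : ((M.factorial * (M+1)^m : ℕ) : ℝ) ≤ (((M + m).factorial : ℕ) : ℝ) :=
    Nat.cast_le.mpr this
  push_cast at hcast
  rw [add_comm m M]
  exact hcast

lemma term_bound (y : ℝ) (hy : 0 ≤ y) (M m : ℕ) (hM : 2*y ≤ ((M:ℝ)+1)^2) :
    y^(m+M) / (((m+M).factorial : ℝ) * ((m+M).factorial : ℝ))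
      ≤ (y^M / ((M.factorial:ℝ) * M.factorial)) * (1/2)^m := by
  have hMf : (0:ℝ) < (M.factorial : ℝ) := Nat.cast_pos.mpr (Nat.factorial_pos _)
  have hMp : (0:ℝ) < ((M:ℝ)+1)^m := by positivity
  have h1 : ((M.factorial : ℝ)) * ((M:ℝ)+1)^m ≤ ((m + M).factorial : ℝ) := fact_lower M m
  have hmf : (0:ℝ) < ((m+M).factorial : ℝ) := Nat.cast_pos.mpr (Nat.factorial_pos _)
  have hden : (0:ℝ) < ((M.factorial : ℝ)) * ((M:ℝ)+1)^m := by positivity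
  have e1 : (((M:ℝ)+1)^2/2)^m = (((M:ℝ)+1)^m)^2 / 2^m := by
    rw [div_pow, ← pow_mul, mul_comm 2 m, pow_mul]
  have hnum : y^(m+M) ≤ ((((M:ℝ)+1)^m)^2 / 2^m) * y^M := by
    rw [← e1, pow_add]
    apply mul_le_mul_of_nonneg_right _ (by positivity)
    apply pow_le_pow_left₀ hy
    linarith
  have step1 : y^(m+M) / (((m+M).factorial : ℝ) * ((m+M).factorial : ℝ))
      ≤ (((((M:ℝ)+1)^m)^2 / 2^m) * y^M)
        / ((((M.factorial : ℝ)) * ((M:ℝ)+1)^m) * (((M.factorial : ℝ)) * ((M:ℝ)+1)^m)) := by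
    apply div_le_div₀ (by positivity) hnum (by positivity)
    exact mul_le_mul h1 h1 (le_of_lt hden) (le_of_lt hmf)
  refine step1.trans (le_of_eq ?_)
  have h2m : (0:ℝ) < 2^m := by positivity
  have hone : ((1:ℝ)/2)^m = 1/2^m := by rw [div_pow, one_pow]
  rw [hone]
  field_simp

lemma term_bound' (y : ℝ) (hy : 0 ≤ y) (M m : ℕ) (hM : 2*y ≤ ((M:ℝ)+1)^2) :
    y^(m+M) / (((m+M).factorial : ℝ) * ((m+M+1).factorial : ℝ))
      ≤ (y^M / ((M.factorial:ℝ) * (M+1).factorial)) * (1/2)^m := by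
  have hMf : (0:ℝ) < (M.factorial : ℝ) := Nat.cast_pos.mpr (Nat.factorial_pos _)
  have hM1f : (0:ℝ) < ((M+1).factorial : ℝ) := Nat.cast_pos.mpr (Nat.factorial_pos _)
  have hMp : (0:ℝ) < ((M:ℝ)+1)^m := by positivity
  have h1 : ((M.factorial : ℝ)) * ((M:ℝ)+1)^m ≤ ((m + M).factorial : ℝ) := fact_lower M m
  have h1' : (((M+1).factorial : ℝ)) * ((M:ℝ)+1)^m ≤ ((m + M + 1).factorial : ℝ) := by
    have h := fact_lower (M+1) m
    have e : m + (M+1) = m + M + 1 := by omega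
    rw [e] at h
    push_cast at h
    refine le_trans ?_ h
    apply mul_le_mul_of_nonneg_left _ (le_of_lt hM1f)
    apply pow_le_pow_left₀ (by positivity)
    linarith
  have hmf : (0:ℝ) < ((m+M).factorial : ℝ) := Nat.cast_pos.mpr (Nat.factorial_pos _)
  have hmf1 : (0:ℝ) < ((m+M+1).factorial : ℝ) := Nat.cast_pos.mpr (Nat.factorial_pos _)
  have e1 : (((M:ℝ)+1)^2/2)^m = (((M:ℝ)+1)^m)^2 / 2^m := by
    rw [div_pow, ← pow_mul, mul_comm 2 m, pow_mul]
  have hnum : y^(m+M) ≤ ((((M:ℝ)+1)^m)^2 / 2^m) * y^M := by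
    rw [← e1, pow_add]
    apply mul_le_mul_of_nonneg_right _ (by positivity)
    apply pow_le_pow_left₀ hy
    linarith
  have step1 : y^(m+M) / (((m+M).factorial : ℝ) * ((m+M+1).factorial : ℝ))
      ≤ (((((M:ℝ)+1)^m)^2 / 2^m) * y^M)
        / ((((M.factorial : ℝ)) * ((M:ℝ)+1)^m) * ((((M+1).factorial : ℝ)) * ((M:ℝ)+1)^m)) := by
    apply div_le_div₀ (by positivity) hnum (by positivity)
    exact mul_le_mul h1 h1' (by positivity) (le_of_lt hmf)
  refine step1.trans (le_of_eq ?_)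
  have h2m : (0:ℝ) < 2^m := by positivity
  have hone : ((1:ℝ)/2)^m = 1/2^m := by rw [div_pow, one_pow]
  rw [hone]
  field_simp

lemma summable_S (y : ℝ) (hy : 0 ≤ y) :
    Summable (fun m : ℕ => (-1:ℝ)^m * y^m / ((m.factorial : ℝ) * m.factorial)) := by
  apply Summable.of_norm
  apply Summable.of_nonneg_of_le (fun m => norm_nonneg _) (fun m => ?_)
    (Real.summable_pow_div_factorial y)
  simp only [Real.norm_eq_abs, abs_div, abs_mul, abs_pow, abs_neg, abs_one, one_pow, one_mul,
    abs_of_nonneg hy, Nat.abs_cast]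
  have h1 : (0:ℝ) < (m.factorial : ℝ) := Nat.cast_pos.mpr (Nat.factorial_pos _)
  have hf1 : (1:ℝ) ≤ (m.factorial : ℝ) := by
    exact_mod_cast Nat.one_le_iff_ne_zero.mpr (Nat.factorial_ne_zero m)
  have h2 : (m.factorial : ℝ) ≤ (m.factorial : ℝ) * (m.factorial : ℝ) := by nlinarith
  exact div_le_div_of_nonneg_left (by positivity) h1 h2

lemma summable_T (y : ℝ) (hy : 0 ≤ y) :
    Summable (fun m : ℕ => (-1:ℝ)^m * y^m / ((m.factorial : ℝ) * (m+1).factorial)) := by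
  apply Summable.of_norm
  apply Summable.of_nonneg_of_le (fun m => norm_nonneg _) (fun m => ?_)
    (Real.summable_pow_div_factorial y)
  simp only [Real.norm_eq_abs, abs_div, abs_mul, abs_pow, abs_neg, abs_one, one_pow, one_mul,
    abs_of_nonneg hy, Nat.abs_cast]
  have h1 : (0:ℝ) < (m.factorial : ℝ) := Nat.cast_pos.mpr (Nat.factorial_pos _)
  have hf1 : (1:ℝ) ≤ ((m+1).factorial : ℝ) := by
    exact_mod_cast Nat.one_le_iff_ne_zero.mpr (Nat.factorial_ne_zero (m+1))
  have h2 : (m.factorial : ℝ) ≤ (m.factorial : ℝ) * ((m+1).factorial : ℝ) := by nlinarith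
  exact div_le_div_of_nonneg_left (by positivity) h1 h2

lemma S_tail (y : ℝ) (hy : 0 ≤ y) (M : ℕ) (hM : 2*y ≤ ((M:ℝ)+1)^2) :
    |(∑' m : ℕ, (-1)^m * y^m / ((m.factorial:ℝ) * m.factorial))
        - ∑ m ∈ Finset.range M, (-1)^m * y^m / ((m.factorial:ℝ) * m.factorial)|
      ≤ 2 * (y^M / ((M.factorial:ℝ) * M.factorial)) := by
  apply tail_half _ M _ (by positivity) (summable_S y hy)
  intro m
  have h1 : |(-1:ℝ)^(m+M) * y^(m+M) / (((m+M).factorial:ℝ) * (m+M).factorial)|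
      = y^(m+M) / (((m+M).factorial:ℝ) * (m+M).factorial) := by
    simp [abs_div, abs_mul, abs_pow, abs_of_nonneg hy, Nat.abs_cast]
  rw [h1]
  exact term_bound y hy M m hM

lemma T_tail (y : ℝ) (hy : 0 ≤ y) (M : ℕ) (hM : 2*y ≤ ((M:ℝ)+1)^2) :
    |(∑' m : ℕ, (-1)^m * y^m / ((m.factorial:ℝ) * (m+1).factorial))
        - ∑ m ∈ Finset.range M, (-1)^m * y^m / ((m.factorial:ℝ) * (m+1).factorial)|
      ≤ 2 * (y^M / ((M.factorial:ℝ) * (M+1).factorial)) := by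
  apply tail_half _ M _ (by positivity) (summable_T y hy)
  intro m
  have h1 : |(-1:ℝ)^(m+M) * y^(m+M) / (((m+M).factorial:ℝ) * ((m+M)+1).factorial)|
      = y^(m+M) / (((m+M).factorial:ℝ) * ((m+M+1)).factorial) := by
    simp [abs_div, abs_mul, abs_pow, abs_of_nonneg hy, Nat.abs_cast]
  rw [h1]
  exact term_bound' y hy M m hM

lemma J0_bounds (x lo hi : ℝ) (M : ℕ) (hx : 0 ≤ x) (hM : 2*(x^2/4) ≤ ((M:ℝ)+1)^2)
    (hlo : lo + 2*((x^2/4)^M / ((M.factorial:ℝ) * M.factorial))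
      ≤ ∑ m ∈ Finset.range M, (-1)^m * (x^2/4)^m / ((m.factorial:ℝ) * m.factorial))
    (hhi : (∑ m ∈ Finset.range M, (-1)^m * (x^2/4)^m / ((m.factorial:ℝ) * m.factorial))
      + 2*((x^2/4)^M / ((M.factorial:ℝ) * M.factorial)) ≤ hi) :
    lo ≤ J0 x ∧ J0 x ≤ hi := by
  have h := S_tail (x^2/4) (by positivity) M hM
  rw [← J0_series x] at h
  have h2 := abs_le.mp h
  exact ⟨by linarith [h2.1], by linarith [h2.2]⟩

lemma J1_eq_half_mul (x : ℝ) :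
    J1 x = (x/2) * ∑' m : ℕ, (-1)^m * (x^2/4)^m / ((m.factorial:ℝ) * (m+1).factorial) := by
  rw [J1_series, ← tsum_mul_left]
  apply tsum_congr
  intro m
  ring

lemma J1_bounds (x lo hi : ℝ) (M : ℕ) (hx : 0 ≤ x) (hM : 2*(x^2/4) ≤ ((M:ℝ)+1)^2)
    (hlo : lo ≤ (x/2) * ((∑ m ∈ Finset.range M, (-1)^m * (x^2/4)^m / ((m.factorial:ℝ) * (m+1).factorial))
      - 2*((x^2/4)^M / ((M.factorial:ℝ) * (M+1).factorial))))
    (hhi : (x/2) * ((∑ m ∈ Finset.range M, (-1)^m * (x^2/4)^m / ((m.factorial:ℝ) * (m+1).factorial))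
      + 2*((x^2/4)^M / ((M.factorial:ℝ) * (M+1).factorial))) ≤ hi) :
    lo ≤ J1 x ∧ J1 x ≤ hi := by
  have h := T_tail (x^2/4) (by positivity) M hM
  have h2 := abs_le.mp h
  rw [J1_eq_half_mul x]
  have hx2 : (0:ℝ) ≤ x/2 := by linarith
  constructor
  · refine le_trans hlo ?_
    apply mul_le_mul_of_nonneg_left _ hx2
    linarith [h2.1]
  · refine le_trans ?_ hhi
    apply mul_le_mul_of_nonneg_left _ hx2
    linarith [h2.2]

noncomputable def EE (x : ℝ) : ℝ := (J0 x)^2 + (J1 x)^2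
noncomputable def NN (x : ℝ) : ℝ := x * EE x - J0 x * J1 x
noncomputable def RR (x : ℝ) : ℝ := NN x * x / (x - 1/2)

lemma J0_zero : J0 0 = 1 := by
  simp [J0, Real.pi_ne_zero]

lemma J1_zero : J1 0 = 0 := by
  simp [J1]

lemma hasDerivAt_EE (x : ℝ) (hx : x ≠ 0) :
    HasDerivAt EE (-2 * (J1 x)^2 / x) x := by
  have h0 := (hasDerivAt_J0 x).pow 2
  have h1 := (hasDerivAt_J1 x).pow 2
  have h := h0.add h1
  refine h.congr_deriv ?_
  push_cast
  rw [J2_eq x hx]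
  field_simp
  ring

lemma diff_EE (x : ℝ) : DifferentiableAt ℝ EE x :=
  (((hasDerivAt_J0 x).pow 2).add ((hasDerivAt_J1 x).pow 2)).differentiableAt

lemma EE_antitone : AntitoneOn EE (Set.Ici (0:ℝ)) := by
  apply antitoneOn_of_deriv_nonpos (convex_Ici 0)
  · exact (Differentiable.continuous (fun x => diff_EE x)).continuousOn
  · intro x hx
    exact (diff_EE x).differentiableWithinAt
  · intro x hx
    rw [interior_Ici] at hx
    have hx0 : x ≠ 0 := ne_of_gt hx
    rw [(hasDerivAt_EE x hx0).deriv]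
    have : 0 < x := hx
    have h2 : (0:ℝ) ≤ (J1 x)^2 := sq_nonneg _
    have : -2 * (J1 x)^2 ≤ 0 := by nlinarith
    exact div_nonpos_of_nonpos_of_nonneg this (le_of_lt hx)

lemma EE_le_one {x : ℝ} (hx : 0 ≤ x) : EE x ≤ 1 := by
  have := EE_antitone (Set.self_mem_Ici) hx hx
  have h0 : EE 0 = 1 := by simp [EE, J0_zero, J1_zero]
  linarith

-- numeric facts (to be proven from the series later)



lemma Jbnds0 : (7651/10000 ≤ J0 1 ∧ J0 1 ≤ 7652/10000) ∧ (4400/10000 ≤ J1 1 ∧ J1 1 ≤ 4401/10000) := by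
  constructor
  · exact J0_bounds 1 (7651/10000) (7652/10000) 8 (by norm_num) (by norm_num)
      (by norm_num [Finset.sum_range_succ, Nat.factorial])
      (by norm_num [Finset.sum_range_succ, Nat.factorial])
  · exact J1_bounds 1 (4400/10000) (4401/10000) 8 (by norm_num) (by norm_num)
      (by norm_num [Finset.sum_range_succ, Nat.factorial])
      (by norm_num [Finset.sum_range_succ, Nat.factorial])

lemma Jbnds1 : (6459/10000 ≤ J0 (5/4) ∧ J0 (5/4) ≤ 6460/10000) ∧ (5106/10000 ≤ J1 (5/4) ∧ J1 (5/4) ≤ 5107/10000) := by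
  constructor
  · exact J0_bounds (5/4) (6459/10000) (6460/10000) 8 (by norm_num) (by norm_num)
      (by norm_num [Finset.sum_range_succ, Nat.factorial])
      (by norm_num [Finset.sum_range_succ, Nat.factorial])
  · exact J1_bounds (5/4) (5106/10000) (5107/10000) 8 (by norm_num) (by norm_num)
      (by norm_num [Finset.sum_range_succ, Nat.factorial])
      (by norm_num [Finset.sum_range_succ, Nat.factorial])

lemma Jbnds2 : (5395/10000 ≤ J0 (29/20) ∧ J0 (29/20) ≤ 5396/10000) ∧ (5504/10000 ≤ J1 (29/20) ∧ J1 (29/20) ≤ 5505/10000) := by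
  constructor
  · exact J0_bounds (29/20) (5395/10000) (5396/10000) 8 (by norm_num) (by norm_num)
      (by norm_num [Finset.sum_range_succ, Nat.factorial])
      (by norm_num [Finset.sum_range_succ, Nat.factorial])
  · exact J1_bounds (29/20) (5504/10000) (5505/10000) 8 (by norm_num) (by norm_num)
      (by norm_num [Finset.sum_range_succ, Nat.factorial])
      (by norm_num [Finset.sum_range_succ, Nat.factorial])

lemma Jbnds3 : (4267/10000 ≤ J0 (33/20) ∧ J0 (33/20) ≤ 4268/10000) ∧ (5743/10000 ≤ J1 (33/20) ∧ J1 (33/20) ≤ 5744/10000) := by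
  constructor
  · exact J0_bounds (33/20) (4267/10000) (4268/10000) 8 (by norm_num) (by norm_num)
      (by norm_num [Finset.sum_range_succ, Nat.factorial])
      (by norm_num [Finset.sum_range_succ, Nat.factorial])
  · exact J1_bounds (33/20) (5743/10000) (5744/10000) 8 (by norm_num) (by norm_num)
      (by norm_num [Finset.sum_range_succ, Nat.factorial])
      (by norm_num [Finset.sum_range_succ, Nat.factorial])

lemma Jbnds4 : (2818/10000 ≤ J0 (19/10) ∧ J0 (19/10) ≤ 2819/10000) ∧ (5811/10000 ≤ J1 (19/10) ∧ J1 (19/10) ≤ 5812/10000) := by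
  constructor
  · exact J0_bounds (19/10) (2818/10000) (2819/10000) 8 (by norm_num) (by norm_num)
      (by norm_num [Finset.sum_range_succ, Nat.factorial])
      (by norm_num [Finset.sum_range_succ, Nat.factorial])
  · exact J1_bounds (19/10) (5811/10000) (5812/10000) 8 (by norm_num) (by norm_num)
      (by norm_num [Finset.sum_range_succ, Nat.factorial])
      (by norm_num [Finset.sum_range_succ, Nat.factorial])

lemma Jbnds5 : (1103/10000 ≤ J0 (11/5) ∧ J0 (11/5) ≤ 1104/10000) ∧ (5559/10000 ≤ J1 (11/5) ∧ J1 (11/5) ≤ 5560/10000) := by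
  constructor
  · exact J0_bounds (11/5) (1103/10000) (1104/10000) 8 (by norm_num) (by norm_num)
      (by norm_num [Finset.sum_range_succ, Nat.factorial])
      (by norm_num [Finset.sum_range_succ, Nat.factorial])
  · exact J1_bounds (11/5) (5559/10000) (5560/10000) 8 (by norm_num) (by norm_num)
      (by norm_num [Finset.sum_range_succ, Nat.factorial])
      (by norm_num [Finset.sum_range_succ, Nat.factorial])

lemma Jbnds6 : (-969/10000 ≤ J0 (13/5) ∧ J0 (13/5) ≤ -968/10000) ∧ (4708/10000 ≤ J1 (13/5) ∧ J1 (13/5) ≤ 4709/10000) := by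
  constructor
  · exact J0_bounds (13/5) (-969/10000) (-968/10000) 8 (by norm_num) (by norm_num)
      (by norm_num [Finset.sum_range_succ, Nat.factorial])
      (by norm_num [Finset.sum_range_succ, Nat.factorial])
  · exact J1_bounds (13/5) (4708/10000) (4709/10000) 8 (by norm_num) (by norm_num)
      (by norm_num [Finset.sum_range_succ, Nat.factorial])
      (by norm_num [Finset.sum_range_succ, Nat.factorial])

lemma Jbnds7 : (-2601/10000 ≤ J0 3 ∧ J0 3 ≤ -2600/10000) ∧ (3390/10000 ≤ J1 3 ∧ J1 3 ≤ 3391/10000) := by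
  constructor
  · exact J0_bounds 3 (-2601/10000) (-2600/10000) 8 (by norm_num) (by norm_num)
      (by norm_num [Finset.sum_range_succ, Nat.factorial])
      (by norm_num [Finset.sum_range_succ, Nat.factorial])
  · exact J1_bounds 3 (3390/10000) (3391/10000) 8 (by norm_num) (by norm_num)
      (by norm_num [Finset.sum_range_succ, Nat.factorial])
      (by norm_num [Finset.sum_range_succ, Nat.factorial])

lemma numE1 : EE 1 ≤ 4/5 := by
  obtain ⟨⟨ha, hb⟩, hc, hd⟩ := Jbnds0
  simp only [EE]
  nlinarith [mul_nonneg (by linarith : (0:ℝ) ≤ J0 1 - (7651/10000)) (by linarith : (0:ℝ) ≤ (7652/10000) - J0 1),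
    mul_nonneg (by linarith : (0:ℝ) ≤ J1 1 - (4400/10000)) (by linarith : (0:ℝ) ≤ (4401/10000) - J1 1)]

lemma numE2 : EE (5/4) ≤ 20/29 := by
  obtain ⟨⟨ha, hb⟩, hc, hd⟩ := Jbnds1
  simp only [EE]
  nlinarith [mul_nonneg (by linarith : (0:ℝ) ≤ J0 (5/4) - (6459/10000)) (by linarith : (0:ℝ) ≤ (6460/10000) - J0 (5/4)),
    mul_nonneg (by linarith : (0:ℝ) ≤ J1 (5/4) - (5106/10000)) (by linarith : (0:ℝ) ≤ (5107/10000) - J1 (5/4))]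

lemma numE3 : EE (29/20) ≤ 20/33 := by
  obtain ⟨⟨ha, hb⟩, hc, hd⟩ := Jbnds2
  simp only [EE]
  nlinarith [mul_nonneg (by linarith : (0:ℝ) ≤ J0 (29/20) - (5395/10000)) (by linarith : (0:ℝ) ≤ (5396/10000) - J0 (29/20)),
    mul_nonneg (by linarith : (0:ℝ) ≤ J1 (29/20) - (5504/10000)) (by linarith : (0:ℝ) ≤ (5505/10000) - J1 (29/20))]

lemma numE4 : EE (33/20) ≤ 10/19 := by
  obtain ⟨⟨ha, hb⟩, hc, hd⟩ := Jbnds3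
  simp only [EE]
  nlinarith [mul_nonneg (by linarith : (0:ℝ) ≤ J0 (33/20) - (4267/10000)) (by linarith : (0:ℝ) ≤ (4268/10000) - J0 (33/20)),
    mul_nonneg (by linarith : (0:ℝ) ≤ J1 (33/20) - (5743/10000)) (by linarith : (0:ℝ) ≤ (5744/10000) - J1 (33/20))]

lemma numE5 : EE (19/10) ≤ 5/11 := by
  obtain ⟨⟨ha, hb⟩, hc, hd⟩ := Jbnds4
  simp only [EE]
  nlinarith [mul_nonneg (by linarith : (0:ℝ) ≤ J0 (19/10) - (2818/10000)) (by linarith : (0:ℝ) ≤ (2819/10000) - J0 (19/10)),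
    mul_nonneg (by linarith : (0:ℝ) ≤ J1 (19/10) - (5811/10000)) (by linarith : (0:ℝ) ≤ (5812/10000) - J1 (19/10))]

lemma numE6 : EE (11/5) ≤ 5/13 := by
  obtain ⟨⟨ha, hb⟩, hc, hd⟩ := Jbnds5
  simp only [EE]
  nlinarith [mul_nonneg (by linarith : (0:ℝ) ≤ J0 (11/5) - (1103/10000)) (by linarith : (0:ℝ) ≤ (1104/10000) - J0 (11/5)),
    mul_nonneg (by linarith : (0:ℝ) ≤ J1 (11/5) - (5559/10000)) (by linarith : (0:ℝ) ≤ (5560/10000) - J1 (11/5))]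

lemma numE7 : EE (13/5) ≤ 1/3 := by
  obtain ⟨⟨ha, hb⟩, hc, hd⟩ := Jbnds6
  simp only [EE]
  nlinarith [mul_nonneg (by linarith : (0:ℝ) ≤ J0 (13/5) - (-969/10000)) (by linarith : (0:ℝ) ≤ (-968/10000) - J0 (13/5)),
    mul_nonneg (by linarith : (0:ℝ) ≤ J1 (13/5) - (4708/10000)) (by linarith : (0:ℝ) ≤ (4709/10000) - J1 (13/5))]

lemma num_N3 : NN 3 ≤ 5/6 := by
  obtain ⟨⟨ha, hb⟩, hc, hd⟩ := Jbnds7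
  simp only [NN, EE]
  nlinarith [mul_nonneg (by linarith : (0:ℝ) ≤ J0 3 - (-2601/10000)) (by linarith : (0:ℝ) ≤ (-2600/10000) - J0 3),
    mul_nonneg (by linarith : (0:ℝ) ≤ J1 3 - (3390/10000)) (by linarith : (0:ℝ) ≤ (3391/10000) - J1 3)]

lemma two_mul_J0J1_le (x : ℝ) : 2 * (J0 x * J1 x) ≤ EE x := by
  have := sq_nonneg (J0 x - J1 x)
  simp only [EE]; nlinarith

lemma hasDerivAt_NN (x : ℝ) (hx : x ≠ 0) :
    HasDerivAt NN (J0 x * J1 x / x) x := by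
  have hE := hasDerivAt_EE x hx
  have h := ((hasDerivAt_id x).mul hE).sub ((hasDerivAt_J0 x).mul (hasDerivAt_J1 x))
  refine h.congr_deriv ?_
  simp only [id_eq]
  rw [J2_eq x hx]
  simp only [EE]
  field_simp
  ring

lemma RR_antitone : AntitoneOn RR (Set.Ici (3:ℝ)) := by
  have hdiff : ∀ x ∈ Set.Ici (3:ℝ), HasDerivAt RR
      ((J0 x * J1 x * (x - 1/2) - NN x / 2) / (x - 1/2)^2) x := by
    intro x hx
    have hx3 : (3:ℝ) ≤ x := hx
    have hx0 : x ≠ 0 := by positivity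
    have hxh : x - 1/2 ≠ 0 := by norm_num; nlinarith
    have hN := hasDerivAt_NN x hx0
    have hnum := hN.mul (hasDerivAt_id x)
    have hden : HasDerivAt (fun y : ℝ => y - 1/2) 1 x := by
      simpa using (hasDerivAt_id x).sub_const (1/2)
    have h := hnum.div hden hxh
    refine h.congr_deriv ?_
    simp only [id_eq, mul_one, Pi.mul_apply]
    field_simp
    ring
  apply antitoneOn_of_deriv_nonpos (convex_Ici 3)
  · intro x hx
    exact (hdiff x hx).differentiableAt.continuousAt.continuousWithinAt
  · intro x hx
    rw [interior_Ici] at hx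
    exact (hdiff x (Set.mem_Ici.mpr (le_of_lt hx))).differentiableAt.differentiableWithinAt
  · intro x hx
    rw [interior_Ici] at hx
    have hx3 : (3:ℝ) < x := hx
    rw [(hdiff x (le_of_lt hx3)).deriv]
    apply div_nonpos_of_nonpos_of_nonneg _ (sq_nonneg _)
    -- J0J1(x-1/2) - N/2 ≤ 0  ⟺ 2xJ0J1 ≤ xE
    have h2 := two_mul_J0J1_le x
    have hxpos : (0:ℝ) < x := by linarith
    simp only [NN]
    nlinarith [h2]
  
lemma xE_le_RR {x : ℝ} (hx : 3 ≤ x) : x * EE x ≤ RR x := by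
  have hxpos : (0:ℝ) < x := by linarith
  have hh : (0:ℝ) < x - 1/2 := by linarith
  rw [RR, NN, le_div_iff₀ hh]
  have h2 := two_mul_J0J1_le x
  nlinarith

lemma key_large {x : ℝ} (hx : 3 ≤ x) : x * (J1 x)^2 ≤ 1 := by
  have h1 : x * (J1 x)^2 ≤ x * EE x := by
    have : (J1 x)^2 ≤ EE x := by simp only [EE]; nlinarith [sq_nonneg (J0 x)]
    nlinarith
  have h2 := xE_le_RR hx
  have h3 : RR x ≤ RR 3 := RR_antitone (Set.self_mem_Ici) hx hx
  have h4 : RR 3 ≤ 1 := by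
    have : RR 3 = NN 3 * 3 / (5/2) := by norm_num [RR]
    rw [this]
    have := num_N3
    linarith
  linarith

lemma key_grid_step {p p' x : ℝ} (hp : 0 ≤ p) (hpx : p ≤ x) (hxp' : x ≤ p')
    (hE : EE p ≤ 1/p') (hp' : 0 < p') : x * (J1 x)^2 ≤ 1 := by
  have hx0 : 0 ≤ x := le_trans hp hpx
  have h1 : (J1 x)^2 ≤ EE x := by simp only [EE]; nlinarith [sq_nonneg (J0 x)]
  have h2 : EE x ≤ EE p := EE_antitone hp (le_trans hp hpx) hpx
  have hEx : 0 ≤ EE x := by simp only [EE]; positivity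
  calc x * (J1 x)^2 ≤ x * EE x := by nlinarith
    _ ≤ p' * EE p := by nlinarith
    _ ≤ p' * (1/p') := by nlinarith
    _ = 1 := by field_simp

lemma key {x : ℝ} (hx : 0 < x) : x * (J1 x)^2 ≤ 1 := by
  rcases le_or_gt x 1 with h | h
  · exact key_grid_step le_rfl (le_of_lt hx) h (by norm_num; exact EE_le_one le_rfl) one_pos
  rcases le_or_gt x (5/4) with h2 | h2
  · exact key_grid_step (by norm_num) (le_of_lt h) h2 (by norm_num; linarith [numE1]) (by norm_num)
  rcases le_or_gt x (29/20) with h3 | h3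
  · exact key_grid_step (by norm_num) (le_of_lt h2) h3 (by norm_num; linarith [numE2]) (by norm_num)
  rcases le_or_gt x (33/20) with h4 | h4
  · exact key_grid_step (by norm_num) (le_of_lt h3) h4 (by norm_num; linarith [numE3]) (by norm_num)
  rcases le_or_gt x (19/10) with h5 | h5
  · exact key_grid_step (by norm_num) (le_of_lt h4) h5 (by norm_num; linarith [numE4]) (by norm_num)
  rcases le_or_gt x (11/5) with h6 | h6
  · exact key_grid_step (by norm_num) (le_of_lt h5) h6 (by norm_num; linarith [numE5]) (by norm_num)
  rcases le_or_gt x (13/5) with h7 | h7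
  · exact key_grid_step (by norm_num) (le_of_lt h6) h7 (by norm_num; linarith [numE6]) (by norm_num)
  rcases le_or_gt x 3 with h8 | h8
  · exact key_grid_step (by norm_num) (le_of_lt h7) h8 (by norm_num; linarith [numE7]) (by norm_num)
  · exact key_large (le_of_lt h8)


/-- Fourier-coefficient form of the estimate
`‖∂_u (J⁰_u Φ)‖_{H^s} ≤ u^{-1/2} ‖Φ‖_{H^{s+1/2}}` for mean-zero `Φ` on `𝕋²`:
take `c k = |Φ̂(k)|²`. -/
theorem gyroaverage_deriv_smoothing (u : ℝ) (hu : 0 < u) (s : ℝ)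
    (c : {k : ℤ × ℤ // k ≠ 0} → ℝ) (hc : ∀ k, 0 ≤ c k) :
    ∑' k : {k : ℤ × ℤ // k ≠ 0},
        ENNReal.ofReal (eNorm k.1 ^ 2 * (deriv J0 (eNorm k.1 * u)) ^ 2 *
          (1 + eNorm k.1 ^ 2) ^ s * c k)
      ≤ ENNReal.ofReal (1 / u) *
        ∑' k : {k : ℤ × ℤ // k ≠ 0},
          ENNReal.ofReal ((1 + eNorm k.1 ^ 2) ^ (s + 1/2) * c k) := by
  have hterm : ∀ k : {k : ℤ × ℤ // k ≠ 0},
      eNorm k.1 ^ 2 * (deriv J0 (eNorm k.1 * u)) ^ 2 * (1 + eNorm k.1 ^ 2) ^ s * c k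
        ≤ (1/u) * ((1 + eNorm k.1 ^ 2) ^ (s + 1/2) * c k) := by
    intro k
    set n : ℝ := eNorm k.1 with hn
    have hn0 : 0 < n := by
      rw [hn, eNorm]
      apply Real.sqrt_pos.mpr
      rcases k with ⟨⟨a, b⟩, hk⟩
      have hab : a ≠ 0 ∨ b ≠ 0 := by
        by_contra h
        push_neg at h
        exact hk (Prod.ext h.1 h.2)
      rcases hab with ha | hb
      · have ha' : ((a:ℝ)) ≠ 0 := Int.cast_ne_zero.mpr ha
        have : (0:ℝ) < (a:ℝ)^2 := by positivity
        nlinarith [sq_nonneg ((b:ℤ):ℝ)]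
      · have hb' : ((b:ℝ)) ≠ 0 := Int.cast_ne_zero.mpr hb
        have : (0:ℝ) < (b:ℝ)^2 := by positivity
        nlinarith [sq_nonneg ((a:ℤ):ℝ)]
    have hderiv : deriv J0 (n*u) = -(J1 (n*u)) := (hasDerivAt_J0 (n*u)).deriv
    have hkey : (n*u) * (J1 (n*u))^2 ≤ 1 := key (by positivity)
    have h1 : n^2 * (J1 (n*u))^2 ≤ (1/u) * n := by
      have h := mul_le_mul_of_nonneg_left hkey (le_of_lt (div_pos hn0 hu))
      have hu' : u ≠ 0 := ne_of_gt hu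
      calc n^2 * (J1 (n*u))^2 = (n/u) * ((n*u) * (J1 (n*u))^2) := by field_simp
        _ ≤ (n/u) * 1 := h
        _ = (1/u) * n := by field_simp
    have h2 : n ≤ (1+n^2)^((1:ℝ)/2) := by
      rw [← Real.sqrt_eq_rpow]
      have : n = Real.sqrt (n^2) := (Real.sqrt_sq hn0.le).symm
      rw [this]
      apply Real.sqrt_le_sqrt
      nlinarith [Real.sq_sqrt hn0.le]
    have hbase : (0:ℝ) < 1 + n^2 := by positivity
    have hrs : (1+n^2)^(s+1/2) = (1+n^2)^s * (1+n^2)^((1:ℝ)/2) := by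
      rw [← Real.rpow_add hbase]
    have hrpos : (0:ℝ) < (1+n^2)^s := Real.rpow_pos_of_pos hbase s
    have hck := hc k
    calc n ^ 2 * (deriv J0 (n * u)) ^ 2 * (1 + n ^ 2) ^ s * c k
        = (n^2 * (J1 (n*u))^2) * ((1+n^2)^s * c k) := by rw [hderiv]; ring
      _ ≤ ((1/u) * n) * ((1+n^2)^s * c k) := by
          apply mul_le_mul_of_nonneg_right h1 (mul_nonneg hrpos.le hck)
      _ ≤ ((1/u) * (1+n^2)^((1:ℝ)/2)) * ((1+n^2)^s * c k) := by
          have hu2 : (0:ℝ) ≤ 1/u := by positivity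
          apply mul_le_mul_of_nonneg_right
            (mul_le_mul_of_nonneg_left h2 hu2) (mul_nonneg hrpos.le hck)
      _ = (1/u) * ((1+n^2)^(s+1/2) * c k) := by rw [hrs]; ring
  calc ∑' k : {k : ℤ × ℤ // k ≠ 0},
        ENNReal.ofReal (eNorm k.1 ^ 2 * (deriv J0 (eNorm k.1 * u)) ^ 2 *
          (1 + eNorm k.1 ^ 2) ^ s * c k)
      ≤ ∑' k : {k : ℤ × ℤ // k ≠ 0},
        ENNReal.ofReal ((1/u) * ((1 + eNorm k.1 ^ 2) ^ (s + 1/2) * c k)) :=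
        ENNReal.tsum_le_tsum (fun k => ENNReal.ofReal_le_ofReal (hterm k))
    _ = ∑' k : {k : ℤ × ℤ // k ≠ 0},
        ENNReal.ofReal (1/u) * ENNReal.ofReal ((1 + eNorm k.1 ^ 2) ^ (s + 1/2) * c k) := by
        apply tsum_congr
        intro k
        exact ENNReal.ofReal_mul (by positivity)
    _ = ENNReal.ofReal (1 / u) *
        ∑' k : {k : ℤ × ℤ // k ≠ 0},
          ENNReal.ofReal ((1 + eNorm k.1 ^ 2) ^ (s + 1/2) * c k) := ENNReal.tsum_mul_left
end

section
/- For every continuously differentiable, compactly supported function F : ℝ² → ℝ, ∫_{ℝ²} F(v)² / ‖v‖ dv ≤ 2 · ( ∫_{ℝ²} ‖∇F(v)‖² dv )^{1/2} · ( ∫_{ℝ²} F(v)² dv )^{1/2}, where ‖v‖ is the Euclidean norm on ℝ² and ∇F is the gradient of F. -/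
open MeasureTheory Real Set

local notation "E2" => EuclideanSpace ℝ (Fin 2)

lemma grad_norm_eq' (F : E2 → ℝ) (v : E2) : ‖gradient F v‖ = ‖fderiv ℝ F v‖ := by
  rw [gradient]; exact LinearIsometryEquiv.norm_map _ _

lemma Hcont' (F : E2 → ℝ) (hF : ContDiff ℝ 1 F) :
    Continuous (fun v : E2 => 2 * |F v| * ‖gradient F v‖) := by
  have hg : Continuous (fun v : E2 => gradient F v) :=
    (InnerProductSpace.toDual ℝ E2).symm.continuous.comp (hF.continuous_fderiv one_ne_zero)
  exact ((continuous_const.mul hF.continuous.abs).mul hg.norm)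

lemma Hcs' (F : E2 → ℝ) (hsupp : HasCompactSupport F) :
    HasCompactSupport (fun v : E2 => 2 * |F v| * ‖gradient F v‖) := by
  have h1 : HasCompactSupport (fun v : E2 => 2 * |F v|) :=
    hsupp.comp_left (g := fun x : ℝ => 2 * |x|) (by simp)
  exact h1.mul_right

lemma H_integrableOn (F : E2 → ℝ) (hF : ContDiff ℝ 1 F) (hsupp : HasCompactSupport F)
    {v : E2} (hv : v ≠ 0) {R : ℝ} (hR0 : 0 ≤ R) (hR : tsupport F ⊆ Metric.closedBall 0 R) :
    IntegrableOn (fun t : ℝ => 2 * |F (t • v)| * ‖gradient F (t • v)‖) (Ioi 1) := by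
  set h0 : E2 → ℝ := fun v => 2 * |F v| * ‖gradient F v‖ with hh0
  have hvpos : 0 < ‖v‖ := norm_pos_iff.2 hv
  set b : ℝ := R / ‖v‖ + 2 with hb
  have hcont : Continuous fun t : ℝ => h0 (t • v) :=
    (Hcont' F hF).comp (continuous_id.smul continuous_const)
  have hzero : ∀ t : ℝ, b < t → h0 (t • v) = 0 := by
    intro t ht
    rw [hb] at ht
    have hFz : F (t • v) = 0 := by
      apply image_eq_zero_of_notMem_tsupport
      intro hmem
      have := hR hmem
      simp only [Metric.mem_closedBall, dist_zero_right] at this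
      rw [norm_smul] at this
      have hbpos : (0:ℝ) < b := by
        have := div_nonneg hR0 hvpos.le; simp only [hb]; linarith
      have ht0 : 0 < t := lt_trans hbpos ht
      rw [Real.norm_eq_abs, abs_of_pos ht0] at this
      have : t ≤ R / ‖v‖ := (le_div_iff₀ hvpos).2 this
      linarith
    have hgz : gradient F (t • v) = 0 := by
      have : fderiv ℝ F (t • v) = 0 := by
        apply image_eq_zero_of_notMem_tsupport
        intro hmem
        have hmem' : t • v ∈ tsupport F := tsupport_fderiv_subset ℝ hmem
        have := hR hmem'
        simp only [Metric.mem_closedBall, dist_zero_right] at this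
        rw [norm_smul] at this
        have hbpos : (0:ℝ) < b := by
          have := div_nonneg hR0 hvpos.le; simp only [hb]; linarith
        have ht0 : 0 < t := lt_trans hbpos ht
        rw [Real.norm_eq_abs, abs_of_pos ht0] at this
        have : t ≤ R / ‖v‖ := (le_div_iff₀ hvpos).2 this
        linarith
      rw [gradient, this]; simp
    simp [hh0, hFz, hgz]
  have h1 : IntegrableOn (fun t : ℝ => h0 (t • v)) (Ioc 1 b) := hcont.integrableOn_Ioc
  have h2 : IntegrableOn (fun t : ℝ => h0 (t • v)) (Ioi b) := by
    apply (integrableOn_congr_fun (g := fun _ => (0:ℝ)) ?_ measurableSet_Ioi).2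
    · exact integrableOn_zero
    · intro t ht; exact hzero t ht
  have : Ioi (1:ℝ) ⊆ Ioc 1 b ∪ Ioi b := by
    intro t ht
    rcases le_or_gt t b with h | h
    · exact Or.inl ⟨ht, h⟩
    · exact Or.inr h
  exact (h1.union h2).mono_set this

lemma pointwise_bound (F : E2 → ℝ) (hF : ContDiff ℝ 1 F) (hsupp : HasCompactSupport F)
    {R : ℝ} (hR0 : 0 ≤ R) (hR : tsupport F ⊆ Metric.closedBall 0 R)
    {v : E2} (hv : v ≠ 0) :
    F v ^ 2 / ‖v‖ ≤ ∫ t in Ioi (1:ℝ), 2 * |F (t • v)| * ‖gradient F (t • v)‖ := by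
  have hvpos : 0 < ‖v‖ := norm_pos_iff.2 hv
  set b : ℝ := R / ‖v‖ + 2 with hb
  have hdn : 0 ≤ R / ‖v‖ := div_nonneg hR0 hvpos.le
  have hbpos : 0 < b := by simp only [hb]; linarith
  have hb1 : (1:ℝ) ≤ b := by simp only [hb]; linarith
  have hder : ∀ t : ℝ, HasDerivAt (fun t : ℝ => F (t • v) ^ 2)
      (2 * F (t • v) * (fderiv ℝ F (t • v) v)) t := by
    intro t
    have h1 : HasDerivAt (fun t : ℝ => t • v) v t := by
      simpa using (hasDerivAt_id t).smul_const v
    have h2 : HasDerivAt (fun t : ℝ => F (t • v)) (fderiv ℝ F (t • v) v) t :=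
      (hF.differentiable one_ne_zero (t • v)).hasFDerivAt.comp_hasDerivAt t h1
    have := h2.fun_pow 2
    refine this.congr_deriv ?_
    push_cast
    ring
  have hc1 : Continuous fun t : ℝ => t • v := continuous_id.smul continuous_const
  have hc2 : Continuous (fderiv ℝ F) := hF.continuous_fderiv one_ne_zero
  have hcontd : Continuous fun t : ℝ => 2 * F (t • v) * (fderiv ℝ F (t • v) v) :=
    (continuous_const.mul (hF.continuous.comp hc1)).mul
      ((hc2.comp hc1).clm_apply continuous_const)
  have hftc : ∫ t in (1:ℝ)..b, 2 * F (t • v) * (fderiv ℝ F (t • v) v)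
      = F (b • v) ^ 2 - F ((1:ℝ) • v) ^ 2 :=
    intervalIntegral.integral_eq_sub_of_hasDerivAt (fun t _ => hder t)
      (hcontd.intervalIntegrable 1 b)
  have hFb : F (b • v) = 0 := by
    apply image_eq_zero_of_notMem_tsupport
    intro hmem
    have := hR hmem
    simp only [Metric.mem_closedBall, dist_zero_right] at this
    rw [norm_smul, Real.norm_eq_abs, abs_of_pos hbpos] at this
    have h2 : b ≤ R / ‖v‖ := (le_div_iff₀ hvpos).2 this
    simp only [hb] at h2; linarith
  have h1 : F v ^ 2 = -∫ t in (1:ℝ)..b, 2 * F (t • v) * (fderiv ℝ F (t • v) v) := by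
    rw [hftc, hFb]; simp
  have hptw : ∀ t : ℝ, |2 * F (t • v) * (fderiv ℝ F (t • v) v)|
      ≤ ‖v‖ * (2 * |F (t • v)| * ‖gradient F (t • v)‖) := by
    intro t
    rw [abs_mul, abs_mul]
    have h3 : |fderiv ℝ F (t • v) v| ≤ ‖gradient F (t • v)‖ * ‖v‖ := by
      rw [grad_norm_eq']
      exact (fderiv ℝ F (t • v)).le_opNorm v
    calc |2| * |F (t • v)| * |fderiv ℝ F (t • v) v|
        ≤ |2| * |F (t • v)| * (‖gradient F (t • v)‖ * ‖v‖) := by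
          apply mul_le_mul_of_nonneg_left h3 (by positivity)
      _ = ‖v‖ * (2 * |F (t • v)| * ‖gradient F (t • v)‖) := by
          rw [abs_of_nonneg (by norm_num : (0:ℝ) ≤ 2)]; ring
  have habs : F v ^ 2 ≤ ∫ t in (1:ℝ)..b,
      ‖v‖ * (2 * |F (t • v)| * ‖gradient F (t • v)‖) := by
    rw [h1]
    refine (neg_le_abs _).trans ?_
    refine (intervalIntegral.abs_integral_le_integral_abs hb1).trans ?_
    apply intervalIntegral.integral_mono_on hb1
    · exact hcontd.abs.intervalIntegrable 1 b
    · exact (continuous_const.mul ((Hcont' F hF).comp hc1)).intervalIntegrable 1 b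
    · intro t _; exact hptw t
  have hHint : IntegrableOn (fun t : ℝ => 2 * |F (t • v)| * ‖gradient F (t • v)‖) (Ioi 1) :=
    H_integrableOn F hF hsupp hv hR0 hR
  have hmono : ∫ t in (1:ℝ)..b, ‖v‖ * (2 * |F (t • v)| * ‖gradient F (t • v)‖)
      ≤ ∫ t in Ioi (1:ℝ), ‖v‖ * (2 * |F (t • v)| * ‖gradient F (t • v)‖) := by
    rw [intervalIntegral.integral_of_le hb1]
    apply setIntegral_mono_set (hHint.const_mul ‖v‖)
    · filter_upwards with t
      positivity
    · exact HasSubset.Subset.eventuallyLE Ioc_subset_Ioi_self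
  have hfinal : F v ^ 2 ≤ ‖v‖ * ∫ t in Ioi (1:ℝ), 2 * |F (t • v)| * ‖gradient F (t • v)‖ := by
    calc F v ^ 2 ≤ _ := habs.trans hmono
      _ = ‖v‖ * ∫ t in Ioi (1:ℝ), 2 * |F (t • v)| * ‖gradient F (t • v)‖ :=
        integral_const_mul _ _
  rw [div_le_iff₀ hvpos]
  linarith [hfinal]

/-- Interpolation-type inequality: `∫ F²/‖v‖ ≤ 2 ‖∇F‖_{L²} ‖F‖_{L²}` on `ℝ²`. -/
theorem integral_sq_div_norm_le (F : EuclideanSpace ℝ (Fin 2) → ℝ)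
    (hF : ContDiff ℝ 1 F) (hsupp : HasCompactSupport F) :
    ∫ v, F v ^ 2 / ‖v‖
      ≤ 2 * Real.sqrt (∫ v, ‖gradient F v‖ ^ 2) * Real.sqrt (∫ v, F v ^ 2) := by
  haveI : NullSingletonClass (volume : Measure (EuclideanSpace ℝ (Fin 2))) :=
    by infer_instance
  obtain ⟨R, hRpos, hR⟩ := hsupp.isBounded.subset_closedBall_lt 0 0
  have hR0 : (0:ℝ) ≤ R := hRpos.le
  set h0 : EuclideanSpace ℝ (Fin 2) → ℝ := fun v => 2 * |F v| * ‖gradient F v‖ with hh0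
  have h0cont : Continuous h0 := Hcont' F hF
  have h0cs : HasCompactSupport h0 := Hcs' F hsupp
  have h0int : Integrable h0 := h0cont.integrable_of_hasCompactSupport h0cs
  set I : ℝ := ∫ v, h0 v with hI
  have hInn : 0 ≤ I := integral_nonneg fun v => by positivity
  -- LHS as lintegral
  have hmeas : AEStronglyMeasurable (fun v : EuclideanSpace ℝ (Fin 2) => F v ^ 2 / ‖v‖) volume :=
    ((hF.continuous.pow 2).measurable.div continuous_norm.measurable).aestronglyMeasurable
  have hnneg : 0 ≤ᵐ[volume] fun v : EuclideanSpace ℝ (Fin 2) => F v ^ 2 / ‖v‖ :=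
    Filter.Eventually.of_forall fun v => div_nonneg (sq_nonneg _) (norm_nonneg _)
  have hLHS : ∫ v, F v ^ 2 / ‖v‖ = (∫⁻ v, ENNReal.ofReal (F v ^ 2 / ‖v‖)).toReal :=
    integral_eq_lintegral_of_nonneg_ae hnneg hmeas
  -- a.e. pointwise bound
  have hae : ∀ᵐ v : EuclideanSpace ℝ (Fin 2), ENNReal.ofReal (F v ^ 2 / ‖v‖)
      ≤ ∫⁻ t in Ioi (1:ℝ), ENNReal.ofReal (h0 (t • v)) := by
    have hv0 : ∀ᵐ v : EuclideanSpace ℝ (Fin 2), v ≠ 0 := by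
      rw [ae_iff]
      have hset : {v : EuclideanSpace ℝ (Fin 2) | ¬ v ≠ 0} = {0} := by ext v; simp
      rw [hset]
      exact measure_singleton 0
    filter_upwards [hv0] with v hv
    have h1 := pointwise_bound F hF hsupp hR0 hR hv
    have h2 : ENNReal.ofReal (∫ t in Ioi (1:ℝ), 2 * |F (t • v)| * ‖gradient F (t • v)‖)
        = ∫⁻ t in Ioi (1:ℝ), ENNReal.ofReal (2 * |F (t • v)| * ‖gradient F (t • v)‖) :=
      ofReal_integral_eq_lintegral_ofReal (H_integrableOn F hF hsupp hv hR0 hR)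
        (Filter.Eventually.of_forall fun t => by positivity)
    exact le_of_le_of_eq (ENNReal.ofReal_le_ofReal h1) h2
  -- swap
  have hswap : (∫⁻ v : EuclideanSpace ℝ (Fin 2), ∫⁻ t in Ioi (1:ℝ),
        ENNReal.ofReal (h0 (t • v)))
      = ∫⁻ t in Ioi (1:ℝ), ∫⁻ v : EuclideanSpace ℝ (Fin 2), ENNReal.ofReal (h0 (t • v)) := by
    apply lintegral_lintegral_swap
    apply Measurable.aemeasurable
    apply ENNReal.measurable_ofReal.comp
    exact (h0cont.comp (continuous_snd.smul continuous_fst)).measurable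
  -- inner integral for fixed t
  have hinner : ∀ t ∈ Ioi (1:ℝ),
      (∫⁻ v : EuclideanSpace ℝ (Fin 2), ENNReal.ofReal (h0 (t • v)))
        = ENNReal.ofReal ((t ^ 2)⁻¹ * I) := by
    intro t ht
    have ht0 : (0:ℝ) < t := lt_trans one_pos ht
    have hcomp : Continuous fun v : EuclideanSpace ℝ (Fin 2) => h0 (t • v) :=
      h0cont.comp (continuous_const_smul t)
    have hcs : HasCompactSupport fun v : EuclideanSpace ℝ (Fin 2) => h0 (t • v) :=
      h0cs.comp_isClosedEmbedding
        (Homeomorph.smulOfNeZero t ht0.ne' :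
          EuclideanSpace ℝ (Fin 2) ≃ₜ EuclideanSpace ℝ (Fin 2)).isClosedEmbedding
    have hint : Integrable fun v : EuclideanSpace ℝ (Fin 2) => h0 (t • v) :=
      hcomp.integrable_of_hasCompactSupport hcs
    rw [← ofReal_integral_eq_lintegral_ofReal hint
      (Filter.Eventually.of_forall fun v => by positivity)]
    congr 1
    have hs := MeasureTheory.Measure.integral_comp_smul (volume :
      Measure (EuclideanSpace ℝ (Fin 2))) h0 t
    rw [hs, finrank_euclideanSpace_fin, smul_eq_mul, abs_of_nonneg (by positivity)]
  -- outer integral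
  have houter : (∫⁻ t in Ioi (1:ℝ), ENNReal.ofReal ((t ^ 2)⁻¹ * I)) = ENNReal.ofReal I := by
    have heq : EqOn (fun t : ℝ => t ^ (-2:ℝ)) (fun t : ℝ => (t ^ 2)⁻¹) (Ioi 1) := by
      intro t ht
      have ht0 : (0:ℝ) < t := lt_trans one_pos ht
      simp only
      rw [Real.rpow_neg ht0.le, show ((2:ℝ) = ((2:ℕ):ℝ)) by norm_num, Real.rpow_natCast]
    have hint2 : IntegrableOn (fun t : ℝ => (t ^ 2)⁻¹) (Ioi 1) :=
      (integrableOn_Ioi_rpow_of_lt (by norm_num : (-2:ℝ) < -1) one_pos).congr_fun heq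
        measurableSet_Ioi
    have hint : IntegrableOn (fun t : ℝ => (t ^ 2)⁻¹ * I) (Ioi 1) := hint2.mul_const I
    rw [← ofReal_integral_eq_lintegral_ofReal hint
      (Filter.Eventually.of_forall fun t => mul_nonneg (by positivity) hInn)]
    congr 1
    rw [integral_mul_const]
    have hval : ∫ t in Ioi (1:ℝ), (t ^ 2)⁻¹ = 1 := by
      rw [← setIntegral_congr_fun measurableSet_Ioi heq]
      rw [integral_Ioi_rpow_of_lt (by norm_num) one_pos]
      norm_num
    rw [hval, one_mul]
  -- combine
  have hL : (∫⁻ v, ENNReal.ofReal (F v ^ 2 / ‖v‖)) ≤ ENNReal.ofReal I := by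
    calc (∫⁻ v, ENNReal.ofReal (F v ^ 2 / ‖v‖))
        ≤ ∫⁻ v : EuclideanSpace ℝ (Fin 2), ∫⁻ t in Ioi (1:ℝ), ENNReal.ofReal (h0 (t • v)) :=
          lintegral_mono_ae hae
      _ = ∫⁻ t in Ioi (1:ℝ), ∫⁻ v : EuclideanSpace ℝ (Fin 2), ENNReal.ofReal (h0 (t • v)) := hswap
      _ = ∫⁻ t in Ioi (1:ℝ), ENNReal.ofReal ((t ^ 2)⁻¹ * I) :=
          setLIntegral_congr_fun measurableSet_Ioi
            (fun t ht => hinner t ht)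
      _ = ENNReal.ofReal I := houter
  have hLHSle : ∫ v, F v ^ 2 / ‖v‖ ≤ I := by
    rw [hLHS]
    calc (∫⁻ v, ENNReal.ofReal (F v ^ 2 / ‖v‖)).toReal
        ≤ (ENNReal.ofReal I).toReal := ENNReal.toReal_mono ENNReal.ofReal_ne_top hL
      _ = I := ENNReal.toReal_ofReal hInn
  -- Cauchy-Schwarz
  have hgradcont : Continuous fun v : EuclideanSpace ℝ (Fin 2) => gradient F v :=
    (InnerProductSpace.toDual ℝ (EuclideanSpace ℝ (Fin 2))).symm.continuous.comp
      (hF.continuous_fderiv one_ne_zero)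
  have hgradcs : HasCompactSupport fun v : EuclideanSpace ℝ (Fin 2) => gradient F v := by
    have h1 := hsupp.fderiv ℝ
    exact h1.comp_left
      (g := fun L => (InnerProductSpace.toDual ℝ (EuclideanSpace ℝ (Fin 2))).symm L)
      (map_zero _)
  have hmemF : MemLp F (ENNReal.ofReal 2) volume :=
    hF.continuous.memLp_of_hasCompactSupport hsupp
  have hmemG : MemLp (fun v : EuclideanSpace ℝ (Fin 2) => ‖gradient F v‖)
      (ENNReal.ofReal 2) volume :=
    (hgradcont.norm.memLp_of_hasCompactSupport (hgradcs.norm))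
  have hpq : Real.HolderConjugate 2 2 := Real.HolderConjugate.two_two
  have hCS := integral_mul_norm_le_Lp_mul_Lq hpq hmemF hmemG
  -- rewrite
  have hIeq : I = 2 * ∫ v, ‖F v‖ * ‖gradient F v‖ := by
    rw [hI, ← integral_const_mul]
    congr 1 with v
    rw [Real.norm_eq_abs]; ring
  have hrw1 : (∫ v, ‖F v‖ ^ (2:ℝ)) = ∫ v, F v ^ 2 := by
    congr 1 with v
    rw [show ((2:ℝ) = ((2:ℕ):ℝ)) by norm_num, Real.rpow_natCast, Real.norm_eq_abs, sq_abs]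
  have hrw2 : (∫ v, ‖(‖gradient F v‖)‖ ^ (2:ℝ)) = ∫ v, ‖gradient F v‖ ^ 2 := by
    congr 1 with v
    rw [show ((2:ℝ) = ((2:ℕ):ℝ)) by norm_num, Real.rpow_natCast, norm_norm]
  rw [hrw1, hrw2] at hCS
  simp only [norm_norm] at hCS
  have hfin : I ≤ 2 * Real.sqrt (∫ v, ‖gradient F v‖ ^ 2) * Real.sqrt (∫ v, F v ^ 2) := by
    rw [hIeq]
    rw [Real.sqrt_eq_rpow, Real.sqrt_eq_rpow]
    calc 2 * ∫ v, ‖F v‖ * ‖gradient F v‖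
        ≤ 2 * ((∫ v, F v ^ 2) ^ ((1:ℝ)/2) * (∫ v, ‖gradient F v‖ ^ 2) ^ ((1:ℝ)/2)) := by
          have h2 : (0:ℝ) ≤ 2 := by norm_num
          exact mul_le_mul_of_nonneg_left hCS h2
      _ = 2 * (∫ v, ‖gradient F v‖ ^ 2) ^ ((1:ℝ)/2) * (∫ v, F v ^ 2) ^ ((1:ℝ)/2) := by ring
  exact hLHSle.trans hfin
end
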